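/- arXiv:2512.21656 — 6 statements merged into one kernel-verified Lean document; each statement's English description precedes it below -/
import Mathlib

section
/- Let u₁, u₂, u₃, v₁, v₂, v₃ be vectors in ℝ³ (with the Euclidean norm), and let F, M ≥ 0 and τ > 0 be constants such that ‖uᵢ‖ ≤ F and ‖vᵢ‖ ≤ M for i = 1, 2, 3, det[v₁, v₂, v₃] ≥ τ, and F³ + 3F²M + 3FM² < τ. Then det[u₁+v₁, u₂+v₂, u₃+v₃] > 0. -/
noncomputable def det3 (a b c : EuclideanSpace ℝ (Fin 3)) : ℝ :=
  Matrix.det (Matrix.of ![![a 0, b 0, c 0], ![a 1, b 1, c 1], ![a 2, b 2, c 2]])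

lemma norm_sq3 (x : EuclideanSpace ℝ (Fin 3)) :
    ‖x‖ ^ 2 = x 0 ^ 2 + x 1 ^ 2 + x 2 ^ 2 := by
  rw [← real_inner_self_eq_norm_sq, PiLp.inner_apply]
  simp [Fin.sum_univ_three]

lemma det3_eq (a b c : EuclideanSpace ℝ (Fin 3)) :
    det3 a b c = a 0 * (b 1 * c 2 - b 2 * c 1) - b 0 * (a 1 * c 2 - a 2 * c 1)
      + c 0 * (a 1 * b 2 - a 2 * b 1) := by
  simp [det3, Matrix.det_fin_three]
  ring

lemma abs_det3_le (a b c : EuclideanSpace ℝ (Fin 3)) :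
    |det3 a b c| ≤ ‖a‖ * ‖b‖ * ‖c‖ := by
  have ha := norm_sq3 a
  have hb := norm_sq3 b
  have hc := norm_sq3 c
  have hd := det3_eq a b c
  have h2 : (det3 a b c) ^ 2 ≤ (‖a‖ * ‖b‖ * ‖c‖) ^ 2 := by
    have lag : (b 1 * c 2 - b 2 * c 1)^2 + (b 2 * c 0 - b 0 * c 2)^2 + (b 0 * c 1 - b 1 * c 0)^2
        ≤ ‖b‖^2 * ‖c‖^2 := by
      rw [hb, hc]; nlinarith [sq_nonneg (b 0 * c 0 + b 1 * c 1 + b 2 * c 2)]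
    have cs : (det3 a b c) ^ 2 ≤ ‖a‖^2 *
        ((b 1 * c 2 - b 2 * c 1)^2 + (b 2 * c 0 - b 0 * c 2)^2 + (b 0 * c 1 - b 1 * c 0)^2) := by
      rw [hd, ha]
      nlinarith [sq_nonneg (a 0 * (b 2 * c 0 - b 0 * c 2) - a 1 * (b 1 * c 2 - b 2 * c 1)),
        sq_nonneg (a 0 * (b 0 * c 1 - b 1 * c 0) - a 2 * (b 1 * c 2 - b 2 * c 1)),
        sq_nonneg (a 1 * (b 0 * c 1 - b 1 * c 0) - a 2 * (b 2 * c 0 - b 0 * c 2))]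
    calc (det3 a b c)^2 ≤ _ := cs
      _ ≤ ‖a‖^2 * (‖b‖^2 * ‖c‖^2) := by
          apply mul_le_mul_of_nonneg_left lag (sq_nonneg _)
      _ = (‖a‖ * ‖b‖ * ‖c‖)^2 := by ring
  have hnn : 0 ≤ ‖a‖ * ‖b‖ * ‖c‖ := by positivity
  nlinarith [abs_nonneg (det3 a b c), sq_abs (det3 a b c)]

lemma det3_add_expand (u₁ u₂ u₃ v₁ v₂ v₃ : EuclideanSpace ℝ (Fin 3)) :
    det3 (u₁ + v₁) (u₂ + v₂) (u₃ + v₃) =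
      det3 u₁ u₂ u₃ + det3 u₁ u₂ v₃ + det3 u₁ v₂ u₃ + det3 u₁ v₂ v₃
      + det3 v₁ u₂ u₃ + det3 v₁ u₂ v₃ + det3 v₁ v₂ u₃ + det3 v₁ v₂ v₃ := by
  simp only [det3_eq, PiLp.add_apply]
  ring

/-- positivity of the perturbed determinant. -/
theorem det3_perturbed_pos
    (u₁ u₂ u₃ v₁ v₂ v₃ : EuclideanSpace ℝ (Fin 3)) (F M τ : ℝ)
    (hF : 0 ≤ F) (hM : 0 ≤ M) (hτ : 0 < τ)
    (hu₁ : ‖u₁‖ ≤ F) (hu₂ : ‖u₂‖ ≤ F) (hu₃ : ‖u₃‖ ≤ F)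
    (hv₁ : ‖v₁‖ ≤ M) (hv₂ : ‖v₂‖ ≤ M) (hv₃ : ‖v₃‖ ≤ M)
    (hdet : τ ≤ det3 v₁ v₂ v₃)
    (hlt : F ^ 3 + 3 * F ^ 2 * M + 3 * F * M ^ 2 < τ) :
    0 < det3 (u₁ + v₁) (u₂ + v₂) (u₃ + v₃) := by
  have bnd : ∀ (a b c : EuclideanSpace ℝ (Fin 3)) (A B C : ℝ),
      ‖a‖ ≤ A → ‖b‖ ≤ B → ‖c‖ ≤ C → -(A * B * C) ≤ det3 a b c := by
    intro a b c A B C hA hB hC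
    have h := abs_det3_le a b c
    have hA0 : 0 ≤ A := (norm_nonneg a).trans hA
    have hB0 : 0 ≤ B := (norm_nonneg b).trans hB
    have : ‖a‖ * ‖b‖ * ‖c‖ ≤ A * B * C := by
      gcongr <;> first | positivity | assumption
    have := neg_abs_le (det3 a b c)
    linarith
  rw [det3_add_expand]
  have h1 := bnd u₁ u₂ u₃ F F F hu₁ hu₂ hu₃
  have h2 := bnd u₁ u₂ v₃ F F M hu₁ hu₂ hv₃
  have h3 := bnd u₁ v₂ u₃ F M F hu₁ hv₂ hu₃
  have h4 := bnd u₁ v₂ v₃ F M M hu₁ hv₂ hv₃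
  have h5 := bnd v₁ u₂ u₃ M F F hv₁ hu₂ hu₃
  have h6 := bnd v₁ u₂ v₃ M F M hv₁ hu₂ hv₃
  have h7 := bnd v₁ v₂ u₃ M M F hv₁ hv₂ hu₃
  nlinarith
end

section
/- (Theorem 1) Let T : [0,1]³ → ℝ³ be a differentiable map, and suppose there exist functions a₁, a₂, a₃, φ₁, φ₂, φ₃ : [0,1]³ → ℝ³ and constants F, M ≥ 0 and τ > 0 such that at every point p = (u,v,w) ∈ [0,1]³: ∂T/∂u (p) = a₁(p) + φ₁(p), ∂T/∂v (p) = a₂(p) + φ₂(p), ∂T/∂w (p) = a₃(p) + φ₃(p); ‖aᵢ(p)‖ ≤ F and ‖φᵢ(p)‖ ≤ M for i = 1, 2, 3; det[φ₁(p), φ₂(p), φ₃(p)] ≥ τ; and F³ + 3MF² + 3FM² < τ. Then the Jacobian determinant det[∂T/∂u (p), ∂T/∂v (p), ∂T/∂w (p)] > 0 for every p ∈ [0,1]³, i.e., the mapping T is regular. -/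
lemma key9 (a0 a1 a2 b0 b1 b2 c0 c1 c2 : ℝ) :
    (a0*(b1*c2-b2*c1) - a1*(b0*c2-b2*c0) + a2*(b0*c1-b1*c0))^2
      ≤ (a0^2+a1^2+a2^2)*((b0^2+b1^2+b2^2)*(c0^2+c1^2+c2^2)) := by
  nlinarith [sq_nonneg (b0*c0+b1*c1+b2*c2),
    sq_nonneg (a0*(-(b0*c2-b2*c0)) - a1*(b1*c2-b2*c1)),
    sq_nonneg (a0*(b0*c1-b1*c0) - a2*(b1*c2-b2*c1)),
    sq_nonneg (a1*(b0*c1-b1*c0) + a2*(b0*c2-b2*c0)),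
    sq_nonneg ((b1*c2-b2*c1)), sq_nonneg (b0*c2-b2*c0), sq_nonneg (b0*c1-b1*c0),
    sq_nonneg (a0*(b0*c0+b1*c1+b2*c2)), sq_nonneg (a1*(b0*c0+b1*c1+b2*c2)),
    sq_nonneg (a2*(b0*c0+b1*c1+b2*c2))]

lemma norm_sq_eq3 (a : EuclideanSpace ℝ (Fin 3)) :
    ‖a‖^2 = a 0^2 + a 1^2 + a 2^2 := by
  rw [EuclideanSpace.norm_eq, Real.sq_sqrt (by positivity)]
  simp [Fin.sum_univ_three, Real.norm_eq_abs, sq_abs]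

/-- Multilinear expansion of `det3` of sums. -/
lemma det3_add_expand_s2 (A B C P Q R : EuclideanSpace ℝ (Fin 3)) :
    det3 (A + P) (B + Q) (C + R)
      = det3 A B C + det3 A B R + det3 A Q C + det3 A Q R
        + det3 P B C + det3 P B R + det3 P Q C + det3 P Q R := by
  simp only [det3, Matrix.det_fin_three, Matrix.of_apply, PiLp.add_apply]
  simp only [Matrix.cons_val', Matrix.cons_val_zero, Matrix.cons_val_one,
    Matrix.head_cons, Matrix.empty_val', Matrix.cons_val_fin_one, Matrix.head_fin_const,
    Matrix.cons_val_two, Matrix.tail_cons]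
  ring

lemma det3_bound (a b c : EuclideanSpace ℝ (Fin 3)) {x y z : ℝ}
    (ha : ‖a‖ ≤ x) (hb : ‖b‖ ≤ y) (hc : ‖c‖ ≤ z) :
    |det3 a b c| ≤ x * y * z := by
  refine (abs_det3_le a b c).trans ?_
  have h1 : ‖a‖ * ‖b‖ ≤ x * y :=
    mul_le_mul ha hb (norm_nonneg _) ((norm_nonneg a).trans ha)
  exact mul_le_mul h1 hc (norm_nonneg _)
    (mul_nonneg ((norm_nonneg a).trans ha) ((norm_nonneg b).trans hb))

/-- Theorem 1: general sufficient condition for the regularity of a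
Coons volume mapping `T : [0,1]³ → ℝ³` whose partial derivatives decompose as
`∂T/∂u = a₁ + φ₁`, `∂T/∂v = a₂ + φ₂`, `∂T/∂w = a₃ + φ₃`. -/
theorem coons_volume_regular_of_bounds
    (T : ℝ → ℝ → ℝ → EuclideanSpace ℝ (Fin 3))
    (a₁ a₂ a₃ φ₁ φ₂ φ₃ : ℝ → ℝ → ℝ → EuclideanSpace ℝ (Fin 3))
    (F M τ : ℝ) (hF : 0 ≤ F) (hM : 0 ≤ M) (hτ : 0 < τ)
    (hdu : ∀ u ∈ Set.Icc (0:ℝ) 1, ∀ v ∈ Set.Icc (0:ℝ) 1, ∀ w ∈ Set.Icc (0:ℝ) 1,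
      HasDerivAt (fun t => T t v w) (a₁ u v w + φ₁ u v w) u)
    (hdv : ∀ u ∈ Set.Icc (0:ℝ) 1, ∀ v ∈ Set.Icc (0:ℝ) 1, ∀ w ∈ Set.Icc (0:ℝ) 1,
      HasDerivAt (fun t => T u t w) (a₂ u v w + φ₂ u v w) v)
    (hdw : ∀ u ∈ Set.Icc (0:ℝ) 1, ∀ v ∈ Set.Icc (0:ℝ) 1, ∀ w ∈ Set.Icc (0:ℝ) 1,
      HasDerivAt (fun t => T u v t) (a₃ u v w + φ₃ u v w) w)
    (ha₁ : ∀ u ∈ Set.Icc (0:ℝ) 1, ∀ v ∈ Set.Icc (0:ℝ) 1, ∀ w ∈ Set.Icc (0:ℝ) 1,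
      ‖a₁ u v w‖ ≤ F)
    (ha₂ : ∀ u ∈ Set.Icc (0:ℝ) 1, ∀ v ∈ Set.Icc (0:ℝ) 1, ∀ w ∈ Set.Icc (0:ℝ) 1,
      ‖a₂ u v w‖ ≤ F)
    (ha₃ : ∀ u ∈ Set.Icc (0:ℝ) 1, ∀ v ∈ Set.Icc (0:ℝ) 1, ∀ w ∈ Set.Icc (0:ℝ) 1,
      ‖a₃ u v w‖ ≤ F)
    (hφ₁ : ∀ u ∈ Set.Icc (0:ℝ) 1, ∀ v ∈ Set.Icc (0:ℝ) 1, ∀ w ∈ Set.Icc (0:ℝ) 1,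
      ‖φ₁ u v w‖ ≤ M)
    (hφ₂ : ∀ u ∈ Set.Icc (0:ℝ) 1, ∀ v ∈ Set.Icc (0:ℝ) 1, ∀ w ∈ Set.Icc (0:ℝ) 1,
      ‖φ₂ u v w‖ ≤ M)
    (hφ₃ : ∀ u ∈ Set.Icc (0:ℝ) 1, ∀ v ∈ Set.Icc (0:ℝ) 1, ∀ w ∈ Set.Icc (0:ℝ) 1,
      ‖φ₃ u v w‖ ≤ M)
    (hdet : ∀ u ∈ Set.Icc (0:ℝ) 1, ∀ v ∈ Set.Icc (0:ℝ) 1, ∀ w ∈ Set.Icc (0:ℝ) 1,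
      τ ≤ det3 (φ₁ u v w) (φ₂ u v w) (φ₃ u v w))
    (hlt : F ^ 3 + 3 * M * F ^ 2 + 3 * F * M ^ 2 < τ) :
    ∀ u ∈ Set.Icc (0:ℝ) 1, ∀ v ∈ Set.Icc (0:ℝ) 1, ∀ w ∈ Set.Icc (0:ℝ) 1,
      0 < det3 (deriv (fun t => T t v w) u) (deriv (fun t => T u t w) v)
          (deriv (fun t => T u v t) w) := by
  intro u hu v hv w hw
  rw [(hdu u hu v hv w hw).deriv, (hdv u hu v hv w hw).deriv, (hdw u hu v hv w hw).deriv]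
  set A := a₁ u v w; set B := a₂ u v w; set C := a₃ u v w
  set P := φ₁ u v w; set Q := φ₂ u v w; set R := φ₃ u v w
  rw [det3_add_expand_s2]
  have hA := ha₁ u hu v hv w hw; have hB := ha₂ u hu v hv w hw
  have hC := ha₃ u hu v hv w hw
  have hP := hφ₁ u hu v hv w hw; have hQ := hφ₂ u hu v hv w hw
  have hR := hφ₃ u hu v hv w hw
  have h1 := det3_bound A B C hA hB hC
  have h2 := det3_bound A B R hA hB hR
  have h3 := det3_bound A Q C hA hQ hC
  have h4 := det3_bound A Q R hA hQ hR
  have h5 := det3_bound P B C hP hB hC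
  have h6 := det3_bound P B R hP hB hR
  have h7 := det3_bound P Q C hP hQ hC
  have hτ' := hdet u hu v hv w hw
  have e1 := abs_le.mp h1; have e2 := abs_le.mp h2; have e3 := abs_le.mp h3
  have e4 := abs_le.mp h4; have e5 := abs_le.mp h5; have e6 := abs_le.mp h6
  have e7 := abs_le.mp h7
  nlinarith [e1.1, e2.1, e3.1, e4.1, e5.1, e6.1, e7.1, hτ', hlt]
end

section
/- (Coons boundary interpolation property) Let F₀, F₁ : [0,1] → ℝ be blending functions with F₀(t) + F₁(t) = 1 for all t, F₀(0) = 1, F₀(1) = 0 (hence F₁(0) = 0, F₁(1) = 1), and let S₁, …, S₆ : [0,1]² → ℝ³ be six faces satisfying the edge-compatibility relations. Then the Coons volume T : [0,1]³ → ℝ³ defined by the Coons formula interpolates all six faces: T(u,v,0) = S₁(u,v), T(u,v,1) = S₂(u,v), T(u,0,w) = S₃(u,w), T(u,1,w) = S₄(u,w), T(1,v,w) = S₅(v,w), and T(0,v,w) = S₆(v,w) for all u, v, w ∈ [0,1]. -/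
/-- The twelve edge-compatibility relations between the six faces of a hexahedral
domain (all parameters ranging over `[0,1]`). -/
def EdgeCompat (S₁ S₂ S₃ S₄ S₅ S₆ : ℝ → ℝ → EuclideanSpace ℝ (Fin 3)) : Prop :=
  (∀ u ∈ Set.Icc (0:ℝ) 1, S₁ u 0 = S₃ u 0) ∧
  (∀ u ∈ Set.Icc (0:ℝ) 1, S₁ u 1 = S₄ u 0) ∧
  (∀ u ∈ Set.Icc (0:ℝ) 1, S₂ u 0 = S₃ u 1) ∧
  (∀ u ∈ Set.Icc (0:ℝ) 1, S₂ u 1 = S₄ u 1) ∧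
  (∀ v ∈ Set.Icc (0:ℝ) 1, S₁ 0 v = S₆ v 0) ∧
  (∀ v ∈ Set.Icc (0:ℝ) 1, S₁ 1 v = S₅ v 0) ∧
  (∀ v ∈ Set.Icc (0:ℝ) 1, S₂ 0 v = S₆ v 1) ∧
  (∀ v ∈ Set.Icc (0:ℝ) 1, S₂ 1 v = S₅ v 1) ∧
  (∀ w ∈ Set.Icc (0:ℝ) 1, S₃ 0 w = S₆ 0 w) ∧
  (∀ w ∈ Set.Icc (0:ℝ) 1, S₃ 1 w = S₅ 0 w) ∧
  (∀ w ∈ Set.Icc (0:ℝ) 1, S₄ 0 w = S₆ 1 w) ∧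
  (∀ w ∈ Set.Icc (0:ℝ) 1, S₄ 1 w = S₅ 1 w)

/-- The Coons volume built from blending functions `F₀, F₁` and six faces
`S₁, …, S₆` (face–edge–corner inclusion/exclusion formula). -/
noncomputable def coonsVolume (F₀ F₁ : ℝ → ℝ)
    (S₁ S₂ S₃ S₄ S₅ S₆ : ℝ → ℝ → EuclideanSpace ℝ (Fin 3))
    (u v w : ℝ) : EuclideanSpace ℝ (Fin 3) :=
  F₀ u • S₆ v w + F₁ u • S₅ v w + F₀ v • S₃ u w + F₁ v • S₄ u w
    + F₀ w • S₁ u v + F₁ w • S₂ u v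
    - (F₀ u * F₀ v) • S₃ 0 w - (F₀ u * F₁ v) • S₄ 0 w
    - (F₁ u * F₀ v) • S₃ 1 w - (F₁ u * F₁ v) • S₄ 1 w
    - (F₀ v * F₀ w) • S₁ u 0 - (F₀ v * F₁ w) • S₂ u 0
    - (F₁ v * F₀ w) • S₁ u 1 - (F₁ v * F₁ w) • S₂ u 1
    - (F₀ u * F₀ w) • S₁ 0 v - (F₀ u * F₁ w) • S₂ 0 v
    - (F₁ u * F₀ w) • S₁ 1 v - (F₁ u * F₁ w) • S₂ 1 v
    + (F₀ u * F₀ v * F₀ w) • S₃ 0 0 + (F₀ u * F₀ v * F₁ w) • S₃ 0 1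
    + (F₀ u * F₁ v * F₀ w) • S₄ 0 0 + (F₀ u * F₁ v * F₁ w) • S₄ 0 1
    + (F₁ u * F₀ v * F₀ w) • S₃ 1 0 + (F₁ u * F₀ v * F₁ w) • S₃ 1 1
    + (F₁ u * F₁ v * F₀ w) • S₄ 1 0 + (F₁ u * F₁ v * F₁ w) • S₄ 1 1

/-- the Coons volume interpolates all six boundary faces. -/
theorem coonsVolume_interpolates_faces
    (F₀ F₁ : ℝ → ℝ)
    (hsum : ∀ t ∈ Set.Icc (0:ℝ) 1, F₀ t + F₁ t = 1)
    (hF₀0 : F₀ 0 = 1) (hF₀1 : F₀ 1 = 0) (hF₁0 : F₁ 0 = 0) (hF₁1 : F₁ 1 = 1)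
    (S₁ S₂ S₃ S₄ S₅ S₆ : ℝ → ℝ → EuclideanSpace ℝ (Fin 3))
    (hcompat : EdgeCompat S₁ S₂ S₃ S₄ S₅ S₆) :
    ∀ u ∈ Set.Icc (0:ℝ) 1, ∀ v ∈ Set.Icc (0:ℝ) 1, ∀ w ∈ Set.Icc (0:ℝ) 1,
      coonsVolume F₀ F₁ S₁ S₂ S₃ S₄ S₅ S₆ u v 0 = S₁ u v ∧
      coonsVolume F₀ F₁ S₁ S₂ S₃ S₄ S₅ S₆ u v 1 = S₂ u v ∧
      coonsVolume F₀ F₁ S₁ S₂ S₃ S₄ S₅ S₆ u 0 w = S₃ u w ∧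
      coonsVolume F₀ F₁ S₁ S₂ S₃ S₄ S₅ S₆ u 1 w = S₄ u w ∧
      coonsVolume F₀ F₁ S₁ S₂ S₃ S₄ S₅ S₆ 1 v w = S₅ v w ∧
      coonsVolume F₀ F₁ S₁ S₂ S₃ S₄ S₅ S₆ 0 v w = S₆ v w := by
  obtain ⟨h1, h2, h3, h4, h5, h6, h7, h8, h9, h10, h11, h12⟩ := hcompat
  have m0 : (0:ℝ) ∈ Set.Icc (0:ℝ) 1 := by constructor <;> norm_num
  have m1 : (1:ℝ) ∈ Set.Icc (0:ℝ) 1 := by constructor <;> norm_num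
  intro u hu v hv w hw
  have eu : F₁ u = 1 - F₀ u := by linarith [hsum u hu]
  have ev : F₁ v = 1 - F₀ v := by linarith [hsum v hv]
  have ew : F₁ w = 1 - F₀ w := by linarith [hsum w hw]
  refine ⟨?_, ?_, ?_, ?_, ?_, ?_⟩
  · simp only [coonsVolume, hF₀0, hF₁0, ← h5 v hv, ← h6 v hv, ← h1 u hu, ← h2 u hu,
      ← h1 0 m0, ← h1 1 m1, ← h2 0 m0, ← h2 1 m1, eu, ev]
    module
  · simp only [coonsVolume, hF₀1, hF₁1, ← h7 v hv, ← h8 v hv, ← h3 u hu, ← h4 u hu,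
      ← h3 0 m0, ← h3 1 m1, ← h4 0 m0, ← h4 1 m1, eu, ev]
    module
  · simp only [coonsVolume, hF₀0, hF₁0, ← h9 w hw, ← h10 w hw, h1 u hu, h3 u hu,
      h1 0 m0, h1 1 m1, h3 0 m0, h3 1 m1, eu, ew]
    module
  · simp only [coonsVolume, hF₀1, hF₁1, ← h11 w hw, ← h12 w hw, h2 u hu, h4 u hu,
      h2 0 m0, h2 1 m1, h4 0 m0, h4 1 m1, eu, ew]
    module
  · simp only [coonsVolume, hF₀1, hF₁1, h10 w hw, h12 w hw, h6 v hv, h8 v hv,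
      h6 0 m0, h6 1 m1, h8 0 m0, h8 1 m1, h10 0 m0, h10 1 m1, h12 0 m0, h12 1 m1, ev, ew]
    module
  · simp only [coonsVolume, hF₀0, hF₁0, h9 w hw, h11 w hw, h5 v hv, h7 v hv,
      h5 0 m0, h5 1 m1, h7 0 m0, h7 1 m1, h9 0 m0, h9 1 m1, h11 0 m0, h11 1 m1, ev, ew]
    module
end

section
/- (Corollary 2) Let A, D, E, F, G, H ∈ ℝ³ satisfy D − A = H − E, E − A = H − D, and H − G = E − F, and suppose det[H−E, H−G, H−D] > 0. Let T : [0,1]³ → ℝ³ be a differentiable map whose partial derivatives satisfy, at every (u,v,w) ∈ [0,1]³: ∂T/∂u = (2−v−w)(H−E) + (v+w−1)(D−A), ∂T/∂v = (1−w+u)(H−G) + (w−u)(E−F), ∂T/∂w = (1−v+u)(H−D) + (v−u)(E−A). Then the Jacobian determinant of T is constant and equal to det[H−E, H−G, H−D] > 0 at every point of [0,1]³; in particular T is regular. -/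
/-- Corollary 2: a Coons volume over a hexahedron whose left face
`A D H E` is a parallelogram and with `H − G = E − F` has constant positive
Jacobian determinant `det[H−E, H−G, H−D]`; in particular it is regular. -/
theorem coons_bilinear_jacobian_constant_pos
    (A D E F G H : EuclideanSpace ℝ (Fin 3))
    (h₁ : D - A = H - E) (h₂ : E - A = H - D) (h₃ : H - G = E - F)
    (hdet : 0 < det3 (H - E) (H - G) (H - D))
    (T : ℝ → ℝ → ℝ → EuclideanSpace ℝ (Fin 3))
    (hdu : ∀ u ∈ Set.Icc (0:ℝ) 1, ∀ v ∈ Set.Icc (0:ℝ) 1, ∀ w ∈ Set.Icc (0:ℝ) 1,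
      HasDerivAt (fun t => T t v w)
        ((2 - v - w) • (H - E) + (v + w - 1) • (D - A)) u)
    (hdv : ∀ u ∈ Set.Icc (0:ℝ) 1, ∀ v ∈ Set.Icc (0:ℝ) 1, ∀ w ∈ Set.Icc (0:ℝ) 1,
      HasDerivAt (fun t => T u t w)
        ((1 - w + u) • (H - G) + (w - u) • (E - F)) v)
    (hdw : ∀ u ∈ Set.Icc (0:ℝ) 1, ∀ v ∈ Set.Icc (0:ℝ) 1, ∀ w ∈ Set.Icc (0:ℝ) 1,
      HasDerivAt (fun t => T u v t)
        ((1 - v + u) • (H - D) + (v - u) • (E - A)) w) :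
    ∀ u ∈ Set.Icc (0:ℝ) 1, ∀ v ∈ Set.Icc (0:ℝ) 1, ∀ w ∈ Set.Icc (0:ℝ) 1,
      det3 (deriv (fun t => T t v w) u) (deriv (fun t => T u t w) v)
          (deriv (fun t => T u v t) w)
        = det3 (H - E) (H - G) (H - D) ∧
      0 < det3 (deriv (fun t => T t v w) u) (deriv (fun t => T u t w) v)
          (deriv (fun t => T u v t) w) := by
  intro u hu v hv w hw
  have du : deriv (fun t => T t v w) u = H - E := by
    rw [(hdu u hu v hv w hw).deriv, h₁]; module
  have dv : deriv (fun t => T u t w) v = H - G := by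
    rw [(hdv u hu v hv w hw).deriv, ← h₃]; module
  have dw : deriv (fun t => T u v t) w = H - D := by
    rw [(hdw u hu v hv w hw).deriv, h₂]; module
  rw [du, dv, dw]
  exact ⟨rfl, hdet⟩
end

section
/- Let n ≥ 1 and let P : {0,…,n}³ → ℝ³ be control points defining the trivariate Bézier map T(u,v,w) = Σ_{i=0}^{n} Σ_{j=0}^{n} Σ_{k=0}^{n} P_{ijk} B_i^n(u) B_j^n(v) B_k^n(w). Then the Jacobian determinant of T admits the Bernstein expansion det[∂T/∂u, ∂T/∂v, ∂T/∂w](u,v,w) = Σ_{p=0}^{3n−1} Σ_{q=0}^{3n−1} Σ_{r=0}^{3n−1} J_{pqr} B_p^{3n−1}(u) B_q^{3n−1}(v) B_r^{3n−1}(w) as an identity of polynomial functions, where J_{pqr} = Σ D(i₁,j₁,k₁,i₂,j₂,k₂,i₃,j₃,k₃) · [C(n−1,i₁)C(n,i₂)C(n,i₃)·C(n,j₁)C(n−1,j₂)C(n,j₃)·C(n,k₁)C(n,k₂)C(n−1,k₃)] / [C(3n−1,p)·C(3n−1,q)·C(3n−1,r)], the sum being over all indices with i₁+i₂+i₃ =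 p, j₁+j₂+j₃ = q, k₁+k₂+k₃ = r, 0 ≤ i₁ ≤ n−1, 0 ≤ j₂ ≤ n−1, 0 ≤ k₃ ≤ n−1, and all other indices in {0,…,n}, and D(i₁,j₁,k₁,i₂,j₂,k₂,i₃,j₃,k₃) = n³ det[P_{i₁+1,j₁,k₁} − P_{i₁,j₁,k₁}, P_{i₂,j₂+1,k₂} − P_{i₂,j₂,k₂}, P_{i₃,j₃,k₃+1} − P_{i₃,j₃,k₃}]. -/
/-- The Bernstein basis polynomial `B_i^n(t) = C(n,i) tⁱ (1−t)^{n−i}` as a real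
function. -/
noncomputable def bern (n i : ℕ) (t : ℝ) : ℝ :=
  (n.choose i : ℝ) * t ^ i * (1 - t) ^ (n - i)

/-- The trivariate Bézier volume of degree `(n,n,n)` with control points `P`. -/
noncomputable def bezierVolume (n : ℕ) (P : ℕ → ℕ → ℕ → EuclideanSpace ℝ (Fin 3))
    (u v w : ℝ) : EuclideanSpace ℝ (Fin 3) :=
  ∑ i ∈ Finset.range (n + 1), ∑ j ∈ Finset.range (n + 1), ∑ k ∈ Finset.range (n + 1),
    (bern n i u * bern n j v * bern n k w) • P i j k

/-- `D(i₁,j₁,k₁,i₂,j₂,k₂,i₃,j₃,k₃) = n³ det[ΔᵘP, ΔᵛP, ΔʷP]`. -/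
noncomputable def Dcoef (n : ℕ) (P : ℕ → ℕ → ℕ → EuclideanSpace ℝ (Fin 3))
    (i₁ j₁ k₁ i₂ j₂ k₂ i₃ j₃ k₃ : ℕ) : ℝ :=
  (n : ℝ) ^ 3 *
    det3 (P (i₁ + 1) j₁ k₁ - P i₁ j₁ k₁) (P i₂ (j₂ + 1) k₂ - P i₂ j₂ k₂)
      (P i₃ j₃ (k₃ + 1) - P i₃ j₃ k₃)

/-- The Bézier coefficients `J_{pqr}` of the Jacobian determinant of the trivariate
Bézier volume of degree `n` with control points `P`. -/
noncomputable def Jcoef (n : ℕ) (P : ℕ → ℕ → ℕ → EuclideanSpace ℝ (Fin 3))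
    (p q r : ℕ) : ℝ :=
  ∑ i₁ ∈ Finset.range n, ∑ i₂ ∈ Finset.range (n + 1), ∑ i₃ ∈ Finset.range (n + 1),
  ∑ j₁ ∈ Finset.range (n + 1), ∑ j₂ ∈ Finset.range n, ∑ j₃ ∈ Finset.range (n + 1),
  ∑ k₁ ∈ Finset.range (n + 1), ∑ k₂ ∈ Finset.range (n + 1), ∑ k₃ ∈ Finset.range n,
    if i₁ + i₂ + i₃ = p ∧ j₁ + j₂ + j₃ = q ∧ k₁ + k₂ + k₃ = r then
      Dcoef n P i₁ j₁ k₁ i₂ j₂ k₂ i₃ j₃ k₃ *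
        (((n - 1).choose i₁ * n.choose i₂ * n.choose i₃ * n.choose j₁ *
            (n - 1).choose j₂ * n.choose j₃ * n.choose k₁ * n.choose k₂ *
            (n - 1).choose k₃ : ℕ) : ℝ) /
        (((3 * n - 1).choose p * (3 * n - 1).choose q * (3 * n - 1).choose r : ℕ) : ℝ)
    else 0

/-! ### Auxiliary lemmas -/

lemma bern_eq_eval (n i : ℕ) (t : ℝ) : bern n i t = (bernsteinPolynomial ℝ n i).eval t := by
  simp [bern, bernsteinPolynomial]

lemma bern_hasDerivAt (n i : ℕ) (u : ℝ) :
    HasDerivAt (fun t => bern n i t)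
      ((Polynomial.derivative (bernsteinPolynomial ℝ n i)).eval u) u := by
  have h := (bernsteinPolynomial ℝ n i).hasDerivAt u
  exact h.congr_of_eventuallyEq (Filter.Eventually.of_forall fun t => (bern_eq_eval n i t))

lemma bern_zero_of_gt {n i : ℕ} (h : n < i) (t : ℝ) : bern n i t = 0 := by
  simp [bern, Nat.choose_eq_zero_of_lt h]

lemma deriv_bern_smul_sum {E : Type*} [NormedAddCommGroup E] [NormedSpace ℝ E]
    (n : ℕ) (hn : 1 ≤ n) (X : ℕ → E) (u : ℝ) :
    deriv (fun t => ∑ i ∈ Finset.range (n+1), bern n i t • X i) u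
      = ∑ i ∈ Finset.range n, ((n:ℝ) * bern (n-1) i u) • (X (i+1) - X i) := by
  obtain ⟨m, rfl⟩ : ∃ m, n = m + 1 := ⟨n - 1, by omega⟩
  have h : HasDerivAt (fun t => ∑ i ∈ Finset.range (m+2), bern (m+1) i t • X i)
      (∑ i ∈ Finset.range (m+2),
        ((Polynomial.derivative (bernsteinPolynomial ℝ (m+1) i)).eval u) • X i) u :=
    HasDerivAt.fun_sum fun i _ => (bern_hasDerivAt (m+1) i u).smul_const (X i)
  rw [h.deriv]
  rw [Finset.sum_range_succ']
  have h0 : (Polynomial.derivative (bernsteinPolynomial ℝ (m+1) 0)).eval u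
      = -((m:ℝ)+1) * bern m 0 u := by
    rw [bernsteinPolynomial.derivative_zero]
    simp [bern_eq_eval]
  have hs : ∀ i, (Polynomial.derivative (bernsteinPolynomial ℝ (m+1) (i+1))).eval u
      = ((m:ℝ)+1) * (bern m i u - bern m (i+1) u) := by
    intro i
    rw [bernsteinPolynomial.derivative_succ]
    simp [bern_eq_eval]
  simp only [hs, h0]
  have key : ∑ i ∈ Finset.range (m+1), (((m:ℝ)+1) * (bern m i u - bern m (i+1) u)) • X (i+1)
      = ∑ i ∈ Finset.range (m+1), ((((m:ℝ)+1) * bern m i u) • X (i+1)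
          - (((m:ℝ)+1) * bern m (i+1) u) • X (i+1)) := by
    refine Finset.sum_congr rfl fun i _ => ?_
    rw [mul_sub, sub_smul]
  rw [key, Finset.sum_sub_distrib]
  have h2 : ∑ i ∈ Finset.range (m+1), (((m:ℝ)+1) * bern m (i+1) u) • X (i+1)
      + (((m:ℝ)+1) * bern m 0 u) • X 0
      = ∑ i ∈ Finset.range (m+1), (((m:ℝ)+1) * bern m i u) • X i := by
    rw [← Finset.sum_range_succ' (fun i => (((m:ℝ)+1) * bern m i u) • X i) (m+1)]
    rw [Finset.sum_range_succ]
    simp [bern_zero_of_gt (Nat.lt_succ_self m)]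
  have goal2 : ∑ i ∈ Finset.range (m+1), (((m:ℝ)+1) * bern m i u) • (X (i+1) - X i)
      = ∑ i ∈ Finset.range (m+1), ((((m:ℝ)+1) * bern m i u) • X (i+1)
          - (((m:ℝ)+1) * bern m i u) • X i) := by
    refine Finset.sum_congr rfl fun i _ => smul_sub _ _ _
  simp only [Nat.add_sub_cancel, Nat.cast_add, Nat.cast_one]
  rw [goal2, Finset.sum_sub_distrib, ← h2, neg_mul, neg_smul]
  abel

lemma smul_double_sub (c : ℝ) (n : ℕ) (f g : ℕ → ℕ → EuclideanSpace ℝ (Fin 3))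
    (m : ℕ → ℕ → ℝ) :
    c • ((∑ j ∈ Finset.range (n+1), ∑ k ∈ Finset.range (n+1), m j k • f j k)
        - (∑ j ∈ Finset.range (n+1), ∑ k ∈ Finset.range (n+1), m j k • g j k))
      = ∑ j ∈ Finset.range (n+1), ∑ k ∈ Finset.range (n+1), (c * m j k) • (f j k - g j k) := by
  rw [← Finset.sum_sub_distrib, Finset.smul_sum]
  refine Finset.sum_congr rfl fun j _ => ?_
  rw [← Finset.sum_sub_distrib, Finset.smul_sum]
  refine Finset.sum_congr rfl fun k _ => ?_
  rw [← smul_sub, smul_smul]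

lemma deriv_u (n : ℕ) (hn : 1 ≤ n) (P : ℕ → ℕ → ℕ → EuclideanSpace ℝ (Fin 3)) (u v w : ℝ) :
    deriv (fun t => bezierVolume n P t v w) u
      = ∑ i ∈ Finset.range n, ∑ j ∈ Finset.range (n+1), ∑ k ∈ Finset.range (n+1),
          (((n:ℝ) * bern (n-1) i u) * (bern n j v * bern n k w)) • (P (i+1) j k - P i j k) := by
  have hfun : (fun t => bezierVolume n P t v w)
      = fun t => ∑ i ∈ Finset.range (n+1), bern n i t •
          (∑ j ∈ Finset.range (n+1), ∑ k ∈ Finset.range (n+1),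
            (bern n j v * bern n k w) • P i j k) := by
    funext t
    rw [bezierVolume]
    refine Finset.sum_congr rfl fun i _ => ?_
    rw [Finset.smul_sum]
    refine Finset.sum_congr rfl fun j _ => ?_
    rw [Finset.smul_sum]
    refine Finset.sum_congr rfl fun k _ => ?_
    rw [smul_smul]; congr 1; ring
  rw [hfun, deriv_bern_smul_sum n hn]
  refine Finset.sum_congr rfl fun i _ => ?_
  exact smul_double_sub _ n _ _ _

lemma deriv_v (n : ℕ) (hn : 1 ≤ n) (P : ℕ → ℕ → ℕ → EuclideanSpace ℝ (Fin 3)) (u v w : ℝ) :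
    deriv (fun t => bezierVolume n P u t w) v
      = ∑ j ∈ Finset.range n, ∑ i ∈ Finset.range (n+1), ∑ k ∈ Finset.range (n+1),
          (((n:ℝ) * bern (n-1) j v) * (bern n i u * bern n k w)) • (P i (j+1) k - P i j k) := by
  have hfun : (fun t => bezierVolume n P u t w)
      = fun t => ∑ j ∈ Finset.range (n+1), bern n j t •
          (∑ i ∈ Finset.range (n+1), ∑ k ∈ Finset.range (n+1),
            (bern n i u * bern n k w) • P i j k) := by
    funext t
    rw [bezierVolume, Finset.sum_comm]
    refine Finset.sum_congr rfl fun j _ => ?_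
    rw [Finset.smul_sum]
    refine Finset.sum_congr rfl fun i _ => ?_
    rw [Finset.smul_sum]
    refine Finset.sum_congr rfl fun k _ => ?_
    rw [smul_smul]; congr 1; ring
  rw [hfun, deriv_bern_smul_sum n hn]
  refine Finset.sum_congr rfl fun j _ => ?_
  exact smul_double_sub _ n _ _ _

lemma deriv_w (n : ℕ) (hn : 1 ≤ n) (P : ℕ → ℕ → ℕ → EuclideanSpace ℝ (Fin 3)) (u v w : ℝ) :
    deriv (fun t => bezierVolume n P u v t) w
      = ∑ k ∈ Finset.range n, ∑ i ∈ Finset.range (n+1), ∑ j ∈ Finset.range (n+1),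
          (((n:ℝ) * bern (n-1) k w) * (bern n i u * bern n j v)) • (P i j (k+1) - P i j k) := by
  have hfun : (fun t => bezierVolume n P u v t)
      = fun t => ∑ k ∈ Finset.range (n+1), bern n k t •
          (∑ i ∈ Finset.range (n+1), ∑ j ∈ Finset.range (n+1),
            (bern n i u * bern n j v) • P i j k) := by
    funext t
    rw [bezierVolume]
    rw [show (∑ i ∈ Finset.range (n+1), ∑ j ∈ Finset.range (n+1), ∑ k ∈ Finset.range (n+1),
        (bern n i u * bern n j v * bern n k t) • P i j k)
      = ∑ i ∈ Finset.range (n+1), ∑ k ∈ Finset.range (n+1), ∑ j ∈ Finset.range (n+1),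
        (bern n i u * bern n j v * bern n k t) • P i j k from
      Finset.sum_congr rfl fun i _ => Finset.sum_comm]
    rw [Finset.sum_comm]
    refine Finset.sum_congr rfl fun k _ => ?_
    rw [Finset.smul_sum]
    refine Finset.sum_congr rfl fun i _ => ?_
    rw [Finset.smul_sum]
    refine Finset.sum_congr rfl fun j _ => ?_
    rw [smul_smul]; congr 1; ring
  rw [hfun, deriv_bern_smul_sum n hn]
  refine Finset.sum_congr rfl fun k _ => ?_
  exact smul_double_sub _ n _ _ _

/-! ### det3 multilinearity -/

lemma det3_add₁ (a a' b c : EuclideanSpace ℝ (Fin 3)) :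
    det3 (a + a') b c = det3 a b c + det3 a' b c := by
  simp [det3, Matrix.det_fin_three, PiLp.add_apply]; ring

lemma det3_add₂ (a b b' c : EuclideanSpace ℝ (Fin 3)) :
    det3 a (b + b') c = det3 a b c + det3 a b' c := by
  simp [det3, Matrix.det_fin_three, PiLp.add_apply]; ring

lemma det3_add₃ (a b c c' : EuclideanSpace ℝ (Fin 3)) :
    det3 a b (c + c') = det3 a b c + det3 a b c' := by
  simp [det3, Matrix.det_fin_three, PiLp.add_apply]; ring

lemma det3_smul₁ (r : ℝ) (a b c : EuclideanSpace ℝ (Fin 3)) :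
    det3 (r • a) b c = r * det3 a b c := by
  simp [det3, Matrix.det_fin_three, PiLp.smul_apply, smul_eq_mul]; ring

lemma det3_smul₂ (r : ℝ) (a b c : EuclideanSpace ℝ (Fin 3)) :
    det3 a (r • b) c = r * det3 a b c := by
  simp [det3, Matrix.det_fin_three, PiLp.smul_apply, smul_eq_mul]; ring

lemma det3_smul₃ (r : ℝ) (a b c : EuclideanSpace ℝ (Fin 3)) :
    det3 a b (r • c) = r * det3 a b c := by
  simp [det3, Matrix.det_fin_three, PiLp.smul_apply, smul_eq_mul]; ring

lemma det3_zero₁ (b c : EuclideanSpace ℝ (Fin 3)) : det3 0 b c = 0 := by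
  simp [det3, Matrix.det_fin_three, Matrix.vecHead, Matrix.vecTail]

lemma det3_zero₂ (b c : EuclideanSpace ℝ (Fin 3)) : det3 b 0 c = 0 := by
  simp [det3, Matrix.det_fin_three, Matrix.vecHead, Matrix.vecTail]

lemma det3_zero₃ (b c : EuclideanSpace ℝ (Fin 3)) : det3 b c 0 = 0 := by
  simp [det3, Matrix.det_fin_three, Matrix.vecHead, Matrix.vecTail]

lemma det3_sum₁ {ι : Type*} (s : Finset ι) (f : ι → EuclideanSpace ℝ (Fin 3))
    (b c : EuclideanSpace ℝ (Fin 3)) :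
    det3 (∑ i ∈ s, f i) b c = ∑ i ∈ s, det3 (f i) b c := by
  classical
  induction s using Finset.cons_induction with
  | empty => simp [det3_zero₁]
  | cons x s hx ih => rw [Finset.sum_cons, det3_add₁, ih, Finset.sum_cons]

lemma det3_sum₂ {ι : Type*} (s : Finset ι) (f : ι → EuclideanSpace ℝ (Fin 3))
    (a c : EuclideanSpace ℝ (Fin 3)) :
    det3 a (∑ i ∈ s, f i) c = ∑ i ∈ s, det3 a (f i) c := by
  classical
  induction s using Finset.cons_induction with
  | empty => simp [det3_zero₂]
  | cons x s hx ih => rw [Finset.sum_cons, det3_add₂, ih, Finset.sum_cons]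

lemma det3_sum₃ {ι : Type*} (s : Finset ι) (f : ι → EuclideanSpace ℝ (Fin 3))
    (a b : EuclideanSpace ℝ (Fin 3)) :
    det3 a b (∑ i ∈ s, f i) = ∑ i ∈ s, det3 a b (f i) := by
  classical
  induction s using Finset.cons_induction with
  | empty => simp [det3_zero₃]
  | cons x s hx ih => rw [Finset.sum_cons, det3_add₃, ih, Finset.sum_cons]

/-! ### Bernstein product lemma -/

lemma bern_mul3 (n i₁ i₂ i₃ : ℕ) (h1 : i₁ < n) (h2 : i₂ < n + 1) (h3 : i₃ < n + 1)
    (t : ℝ) :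
    bern (n-1) i₁ t * bern n i₂ t * bern n i₃ t
      = (((n-1).choose i₁ * n.choose i₂ * n.choose i₃ : ℕ) : ℝ)
          / (((3*n-1).choose (i₁+i₂+i₃) : ℕ) : ℝ) * bern (3*n-1) (i₁+i₂+i₃) t := by
  have hs : i₁ + i₂ + i₃ ≤ 3*n - 1 := by omega
  have hc : (((3*n-1).choose (i₁+i₂+i₃) : ℕ) : ℝ) ≠ 0 := by
    exact_mod_cast (Nat.choose_pos hs).ne'
  unfold bern
  have e1 : (n-1) - i₁ + (n - i₂) + (n - i₃) = 3*n-1 - (i₁+i₂+i₃) := by omega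
  rw [div_mul_eq_mul_div, eq_div_iff hc]
  push_cast
  rw [← e1]
  ring

/-! ### Sum permutation and collapse machinery -/

lemma reorder9 {M : Type*} [AddCommMonoid M]
    (A1 A2 A3 B1 B2 B3 C1 C2 C3 : Finset ℕ)
    (f : ℕ → ℕ → ℕ → ℕ → ℕ → ℕ → ℕ → ℕ → ℕ → M) :
    (∑ k3 ∈ C3, ∑ i3 ∈ A3, ∑ j3 ∈ B3, ∑ j2 ∈ B2, ∑ i2 ∈ A2, ∑ k2 ∈ C2,
      ∑ i1 ∈ A1, ∑ j1 ∈ B1, ∑ k1 ∈ C1, f i1 i2 i3 j1 j2 j3 k1 k2 k3)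
    = ∑ i1 ∈ A1, ∑ i2 ∈ A2, ∑ i3 ∈ A3, ∑ j1 ∈ B1, ∑ j2 ∈ B2, ∑ j3 ∈ B3,
      ∑ k1 ∈ C1, ∑ k2 ∈ C2, ∑ k3 ∈ C3, f i1 i2 i3 j1 j2 j3 k1 k2 k3 := by
  conv_lhs => enter [2, x1, 2, x2, 2, x3, 2, x4, 2, x5]; rw [Finset.sum_comm]
  conv_lhs => enter [2, x1, 2, x2, 2, x3, 2, x4]; rw [Finset.sum_comm]
  conv_lhs => enter [2, x1, 2, x2, 2, x3]; rw [Finset.sum_comm]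
  conv_lhs => enter [2, x1, 2, x2]; rw [Finset.sum_comm]
  conv_lhs => enter [2, x1]; rw [Finset.sum_comm]
  rw [Finset.sum_comm]
  conv_lhs => enter [2, x1, 2, x2, 2, x3, 2, x4]; rw [Finset.sum_comm]
  conv_lhs => enter [2, x1, 2, x2, 2, x3]; rw [Finset.sum_comm]
  conv_lhs => enter [2, x1, 2, x2]; rw [Finset.sum_comm]
  conv_lhs => enter [2, x1]; rw [Finset.sum_comm]
  conv_lhs => enter [2, x1, 2, x2]; rw [Finset.sum_comm]
  conv_lhs => enter [2, x1, 2, x2, 2, x3, 2, x4, 2, x5, 2, x6]; rw [Finset.sum_comm]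
  conv_lhs => enter [2, x1, 2, x2, 2, x3, 2, x4, 2, x5]; rw [Finset.sum_comm]
  conv_lhs => enter [2, x1, 2, x2, 2, x3, 2, x4]; rw [Finset.sum_comm]
  conv_lhs => enter [2, x1, 2, x2, 2, x3]; rw [Finset.sum_comm]
  conv_lhs => enter [2, x1, 2, x2, 2, x3, 2, x4, 2, x5]; rw [Finset.sum_comm]
  conv_lhs => enter [2, x1, 2, x2, 2, x3, 2, x4]; rw [Finset.sum_comm]
  conv_lhs => enter [2, x1, 2, x2, 2, x3, 2, x4, 2, x5]; rw [Finset.sum_comm]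
  conv_lhs => enter [2, x1, 2, x2, 2, x3, 2, x4, 2, x5, 2, x6, 2, x7]; rw [Finset.sum_comm]
  conv_lhs => enter [2, x1, 2, x2, 2, x3, 2, x4, 2, x5, 2, x6]; rw [Finset.sum_comm]
  conv_lhs => enter [2, x1, 2, x2, 2, x3, 2, x4, 2, x5, 2, x6, 2, x7]; rw [Finset.sum_comm]

lemma ite_and3 {M : Type*} [Zero M] (A B C : Prop) [Decidable A] [Decidable B] [Decidable C]
    (x : M) :
    (if A ∧ B ∧ C then x else 0)
      = if A then (if B then (if C then x else 0) else 0) else 0 := by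
  by_cases hA : A <;> by_cases hB : B <;> by_cases hC : C <;> simp [hA, hB, hC]

lemma sum_ite_out {M : Type*} [AddCommMonoid M] (s : Finset ℕ) (c : Prop) [Decidable c]
    (f : ℕ → M) :
    (∑ x ∈ s, if c then f x else 0) = if c then ∑ x ∈ s, f x else 0 := by
  split <;> simp

lemma sum_comm3 {M : Type*} [AddCommMonoid M] (S A B C : Finset ℕ) (f : ℕ → ℕ → ℕ → ℕ → M) :
    (∑ p ∈ S, ∑ a ∈ A, ∑ b ∈ B, ∑ c ∈ C, f p a b c)
      = ∑ a ∈ A, ∑ b ∈ B, ∑ c ∈ C, ∑ p ∈ S, f p a b c := by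
  rw [Finset.sum_comm]
  refine Finset.sum_congr rfl fun a _ => ?_
  rw [Finset.sum_comm]
  exact Finset.sum_congr rfl fun b _ => Finset.sum_comm

lemma collapse_blockP {M : Type*} [AddCommMonoid M] (m a b c : ℕ)
    (h : ∀ i1 i2 i3 : ℕ, i1 < a → i2 < b → i3 < c → i1 + i2 + i3 < m)
    (g : ℕ → ℕ → ℕ → ℕ → M) :
    (∑ p ∈ Finset.range m, ∑ i1 ∈ Finset.range a, ∑ i2 ∈ Finset.range b,
        ∑ i3 ∈ Finset.range c, if i1 + i2 + i3 = p then g i1 i2 i3 p else 0)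
      = ∑ i1 ∈ Finset.range a, ∑ i2 ∈ Finset.range b, ∑ i3 ∈ Finset.range c,
          g i1 i2 i3 (i1 + i2 + i3) := by
  rw [sum_comm3]
  refine Finset.sum_congr rfl fun i1 h1 => ?_
  refine Finset.sum_congr rfl fun i2 h2 => ?_
  refine Finset.sum_congr rfl fun i3 h3 => ?_
  rw [Finset.sum_ite_eq]
  simp only [Finset.mem_range] at h1 h2 h3 ⊢
  rw [if_pos (h _ _ _ h1 h2 h3)]

lemma rhs_collapse {M : Type*} [AddCommMonoid M] (n : ℕ)
    (G : ℕ → ℕ → ℕ → ℕ → ℕ → ℕ → ℕ → ℕ → ℕ → ℕ → ℕ → ℕ → M) :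
    (∑ p ∈ Finset.range (3*n), ∑ q ∈ Finset.range (3*n), ∑ r ∈ Finset.range (3*n),
      ∑ i1 ∈ Finset.range n, ∑ i2 ∈ Finset.range (n+1), ∑ i3 ∈ Finset.range (n+1),
      ∑ j1 ∈ Finset.range (n+1), ∑ j2 ∈ Finset.range n, ∑ j3 ∈ Finset.range (n+1),
      ∑ k1 ∈ Finset.range (n+1), ∑ k2 ∈ Finset.range (n+1), ∑ k3 ∈ Finset.range n,
        if i1 + i2 + i3 = p ∧ j1 + j2 + j3 = q ∧ k1 + k2 + k3 = r then
          G i1 i2 i3 j1 j2 j3 k1 k2 k3 p q r else 0)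
      = ∑ i1 ∈ Finset.range n, ∑ i2 ∈ Finset.range (n+1), ∑ i3 ∈ Finset.range (n+1),
        ∑ j1 ∈ Finset.range (n+1), ∑ j2 ∈ Finset.range n, ∑ j3 ∈ Finset.range (n+1),
        ∑ k1 ∈ Finset.range (n+1), ∑ k2 ∈ Finset.range (n+1), ∑ k3 ∈ Finset.range n,
          G i1 i2 i3 j1 j2 j3 k1 k2 k3 (i1+i2+i3) (j1+j2+j3) (k1+k2+k3) := by
  have hP : ∀ i1 i2 i3 : ℕ, i1 < n → i2 < n+1 → i3 < n+1 → i1 + i2 + i3 < 3*n := by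
    intros; omega
  have hQ : ∀ j1 j2 j3 : ℕ, j1 < n+1 → j2 < n → j3 < n+1 → j1 + j2 + j3 < 3*n := by
    intros; omega
  have hR : ∀ k1 k2 k3 : ℕ, k1 < n+1 → k2 < n+1 → k3 < n → k1 + k2 + k3 < 3*n := by
    intros; omega
  simp only [ite_and3, sum_ite_out]
  rw [Finset.sum_comm]
  conv_lhs => enter [2, q]; rw [Finset.sum_comm]
  conv_lhs => enter [2, q, 2, r]; rw [collapse_blockP (3*n) n (n+1) (n+1) hP]
  rw [Finset.sum_comm]
  conv_lhs => enter [2, r]; rw [sum_comm3]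
  conv_lhs => enter [2, r, 2, i1, 2, i2, 2, i3]; rw [collapse_blockP (3*n) (n+1) n (n+1) hQ]
  rw [sum_comm3]
  conv_lhs => enter [2, i1, 2, i2, 2, i3]; rw [sum_comm3]
  conv_lhs => enter [2, i1, 2, i2, 2, i3, 2, j1, 2, j2, 2, j3];
              rw [collapse_blockP (3*n) (n+1) (n+1) n hR]

set_option maxHeartbeats 2000000 in
/-- Bernstein expansion of the Jacobian determinant of a trivariate
Bézier volume. -/
theorem bezier_jacobian_bernstein_expansion (n : ℕ) (hn : 1 ≤ n)
    (P : ℕ → ℕ → ℕ → EuclideanSpace ℝ (Fin 3)) (u v w : ℝ) :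
    det3 (deriv (fun t => bezierVolume n P t v w) u)
        (deriv (fun t => bezierVolume n P u t w) v)
        (deriv (fun t => bezierVolume n P u v t) w)
      = ∑ p ∈ Finset.range (3 * n), ∑ q ∈ Finset.range (3 * n),
          ∑ r ∈ Finset.range (3 * n),
            Jcoef n P p q r * bern (3 * n - 1) p u * bern (3 * n - 1) q v *
              bern (3 * n - 1) r w := by
  rw [deriv_u n hn P u v w, deriv_v n hn P u v w, deriv_w n hn P u v w]
  simp only [det3_sum₁, det3_sum₂, det3_sum₃, det3_smul₁, det3_smul₂, det3_smul₃, Finset.mul_sum]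
  rw [reorder9]
  simp (config := { maxSteps := 10000000 }) only [Jcoef, Finset.sum_mul, ite_mul, zero_mul]
  rw [rhs_collapse n]
  refine Finset.sum_congr rfl fun i1 h1 => ?_
  refine Finset.sum_congr rfl fun i2 h2 => ?_
  refine Finset.sum_congr rfl fun i3 h3 => ?_
  refine Finset.sum_congr rfl fun j1 h4 => ?_
  refine Finset.sum_congr rfl fun j2 h5 => ?_
  refine Finset.sum_congr rfl fun j3 h6 => ?_
  refine Finset.sum_congr rfl fun k1 h7 => ?_
  refine Finset.sum_congr rfl fun k2 h8 => ?_
  refine Finset.sum_congr rfl fun k3 h9 => ?_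
  simp only [Finset.mem_range] at h1 h2 h3 h4 h5 h6 h7 h8 h9
  have hu := bern_mul3 n i1 i2 i3 h1 h2 h3 u
  have hv := bern_mul3 n j2 j1 j3 h5 h4 h6 v
  have hw := bern_mul3 n k3 k1 k2 h9 h7 h8 w
  rw [show j2 + j1 + j3 = j1 + j2 + j3 by omega] at hv
  rw [show k3 + k1 + k2 = k1 + k2 + k3 by omega] at hw
  simp only [Dcoef]
  trans ((n:ℝ)^3 * det3 (P (i1+1) j1 k1 - P i1 j1 k1) (P i2 (j2+1) k2 - P i2 j2 k2)
        (P i3 j3 (k3+1) - P i3 j3 k3)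
      * (bern (n-1) i1 u * bern n i2 u * bern n i3 u)
      * (bern (n-1) j2 v * bern n j1 v * bern n j3 v)
      * (bern (n-1) k3 w * bern n k1 w * bern n k2 w))
  · ring
  · rw [hu, hv, hw]
    push_cast
    ring
end

section
/- (Theorem 3) Let d ∈ ℕ and let g : ℝ³ → ℝ be a polynomial of degree at most d in each of its three variables such that g(u,v,w) ≥ ρ > 0 for all (u,v,w) ∈ [0,1]³. Then there exists σ₀ ∈ ℕ such that for every σ ≥ σ₀ and all i, j, k ∈ {0,…,σ−1}, the tensor-product Bernstein coefficients of g on the subcube [i/σ,(i+1)/σ] × [j/σ,(j+1)/σ] × [k/σ,(k+1)/σ] are all strictly positive; that is, if coefficients c_{pqr} ∈ ℝ (p,q,r ∈ {0,…,d}) satisfy g((i+u)/σ, (j+v)/σ, (k+w)/σ) = Σ_{p=0}^{d} Σ_{q=0}^{d} Σ_{r=0}^{d} c_{pqr} B_p^d(u) B_q^d(v) B_r^d(w) for all (u,v,w), then c_{pqr} > 0 for all p, q, r. In particular, if T is a regular trivariate Bézier volume of degree n (so its Jacobian determinant g has degree at most 3n−1 in each variable and is strictly positive on [0,1]³), then for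 sufficiently fine uniform subdivision all Bézier coefficients of the Jacobian determinant on every sub-block share the same (positive) sign. -/
set_option maxHeartbeats 1000000

open Finset


/-- Monomial coefficients of the Bernstein polynomial. -/
noncomputable def Mco (d α p : ℕ) : ℝ :=
  if p ≤ α then (-1:ℝ)^(α-p) * (d.choose α) * (α.choose p) else 0

/-- Coefficients of the expansion of `((i+u)/σ)^α` in powers of `u`. -/
noncomputable def Eco (σ i α α' : ℕ) : ℝ :=
  if α' ≤ α then (α.choose α' : ℝ) * (i:ℝ)^(α-α') / (σ:ℝ)^α else 0

/-- Coefficients of the expansion of `u^α` in the degree-`d` Bernstein basis. -/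
noncomputable def Nco (d p α : ℕ) : ℝ :=
  if α ≤ p then (p.choose α : ℝ) / (d.choose α : ℝ) else 0

/-- Monomial coefficients of the shifted-rescaled trivariate polynomial. -/
noncomputable def Aco (d : ℕ) (a : ℕ → ℕ → ℕ → ℝ) (σ i j k α β γ : ℕ) : ℝ :=
  ∑ α₀ ∈ range (d+1), ∑ β₀ ∈ range (d+1), ∑ γ₀ ∈ range (d+1),
    a α₀ β₀ γ₀ * Eco σ i α₀ α * Eco σ j β₀ β * Eco σ k γ₀ γ

/-- Bernstein coefficients of the shifted-rescaled trivariate polynomial. -/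
noncomputable def Cco (d : ℕ) (a : ℕ → ℕ → ℕ → ℝ) (σ i j k p q r : ℕ) : ℝ :=
  ∑ α ∈ range (d+1), ∑ β ∈ range (d+1), ∑ γ ∈ range (d+1),
    Aco d a σ i j k α β γ * Nco d p α * Nco d q β * Nco d r γ

lemma poly_zero {n : ℕ} {f : ℕ → ℝ}
    (h : ∀ x : ℝ, ∑ α ∈ range n, f α * x ^ α = 0) : ∀ α < n, f α = 0 := by
  intro α hα
  set P : Polynomial ℝ := ∑ β ∈ range n, Polynomial.C (f β) * Polynomial.X ^ β with hP
  have hP0 : P = 0 := by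
    apply Polynomial.funext
    intro r
    simp only [hP, Polynomial.eval_finset_sum, Polynomial.eval_mul, Polynomial.eval_C,
      Polynomial.eval_pow, Polynomial.eval_X, Polynomial.eval_zero]
    exact h r
  have : P.coeff α = f α := by
    simp [hP, Polynomial.finset_sum_coeff, Polynomial.coeff_C_mul, Polynomial.coeff_X_pow,
      Finset.sum_ite_eq' (range n), mem_range.mpr hα]
  rw [hP0] at this
  simpa using this.symm

lemma bern_eq_sum (d p : ℕ) (hp : p ≤ d) (u : ℝ) :
    bern d p u = ∑ α ∈ range (d+1), Mco d α p * u ^ α := by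
  have h1 : ∑ α ∈ range (d+1), Mco d α p * u ^ α
      = ∑ α ∈ Finset.Ico p (d+1), Mco d α p * u ^ α := by
    refine (Finset.sum_subset ?_ ?_).symm
    · intro x hx; simp only [Finset.mem_Ico] at hx; exact mem_range.mpr hx.2
    · intro x hx hx'
      simp only [Finset.mem_Ico, mem_range] at hx hx'
      have : ¬ p ≤ x := by omega
      simp [Mco, this]
  rw [h1, Finset.sum_Ico_eq_sum_range]
  have hd : d + 1 - p = (d - p) + 1 := by omega
  rw [hd]
  have h2 : (1 - u) ^ (d - p) = ∑ m ∈ range ((d-p)+1), ((-u)^m * (d-p).choose m) := by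
    have := add_pow (-u) 1 (d - p)
    simp only [one_pow, mul_one] at this
    rw [show (1 : ℝ) - u = -u + 1 by ring, this]
  unfold bern
  rw [h2, Finset.mul_sum]
  refine Finset.sum_congr rfl ?_
  intro m hm
  have hm' : m ≤ d - p := by simpa using Nat.lt_succ_iff.mp (mem_range.mp hm)
  have hpm : p + m ≤ d := by omega
  have hcc : (d.choose (p+m) : ℝ) * ((p+m).choose p) = (d.choose p) * ((d-p).choose m) := by
    have := Nat.choose_mul (n := d) (k := p + m) (s := p) (Nat.le_add_right p m)
    rw [Nat.add_sub_cancel_left] at this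
    exact_mod_cast congrArg (Nat.cast : ℕ → ℝ) this
  have : Mco d (p+m) p = (-1:ℝ)^m * (d.choose p) * ((d-p).choose m) := by
    simp only [Mco, if_pos (Nat.le_add_right p m), Nat.add_sub_cancel_left]
    rw [mul_assoc, hcc]; ring
  rw [this, pow_add, neg_pow]
  ring

lemma bern_unique (d : ℕ) (e : ℕ → ℝ)
    (h : ∀ x : ℝ, ∑ p ∈ range (d+1), e p * bern d p x = 0) :
    ∀ p ≤ d, e p = 0 := by
  have key : ∀ α < d + 1, (∑ p ∈ range (d+1), e p * Mco d α p) = 0 := by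
    apply poly_zero
    intro x
    have : ∑ p ∈ range (d+1), e p * bern d p x
        = ∑ α ∈ range (d+1), (∑ p ∈ range (d+1), e p * Mco d α p) * x ^ α := by
      calc ∑ p ∈ range (d+1), e p * bern d p x
          = ∑ p ∈ range (d+1), ∑ α ∈ range (d+1), e p * (Mco d α p * x ^ α) := by
            refine Finset.sum_congr rfl fun p hp => ?_
            rw [bern_eq_sum d p (by simpa using Nat.lt_succ_iff.mp (mem_range.mp hp)),
              Finset.mul_sum]
        _ = ∑ α ∈ range (d+1), ∑ p ∈ range (d+1), e p * (Mco d α p * x ^ α) :=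
            Finset.sum_comm
        _ = ∑ α ∈ range (d+1), (∑ p ∈ range (d+1), e p * Mco d α p) * x ^ α := by
            refine Finset.sum_congr rfl fun α hα => ?_
            rw [Finset.sum_mul]
            refine Finset.sum_congr rfl fun p hp => by ring
    rw [← this]; exact h x
  intro p hp
  induction p using Nat.strong_induction_on with
  | _ p ih =>
    have hkey := key p (by omega)
    have hsingle : ∑ p' ∈ range (d+1), e p' * Mco d p p' = e p * Mco d p p := by
      apply Finset.sum_eq_single
      · intro p' hp' hne
        rcases lt_or_gt_of_ne hne with hlt | hgt
        · rw [ih p' hlt (by omega)]; ring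
        · have : ¬ p' ≤ p := by omega
          simp [Mco, this]
      · intro hmem; exact absurd (mem_range.mpr (by omega)) hmem
    rw [hsingle] at hkey
    have hM : Mco d p p = (d.choose p : ℝ) := by simp [Mco]
    rw [hM] at hkey
    have hc : (0:ℝ) < (d.choose p : ℝ) := by exact_mod_cast Nat.choose_pos hp
    exact (mul_eq_zero.mp hkey).resolve_right (by positivity)

lemma bern_unique3 (d : ℕ) (e : ℕ → ℕ → ℕ → ℝ)
    (h : ∀ u v w : ℝ, ∑ p ∈ range (d+1), ∑ q ∈ range (d+1), ∑ r ∈ range (d+1),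
        e p q r * bern d p u * bern d q v * bern d r w = 0) :
    ∀ p ≤ d, ∀ q ≤ d, ∀ r ≤ d, e p q r = 0 := by
  have h1 : ∀ v w : ℝ, ∀ p ≤ d,
      (∑ q ∈ range (d+1), ∑ r ∈ range (d+1), e p q r * bern d q v * bern d r w) = 0 := by
    intro v w
    apply bern_unique
    intro u
    rw [← h u v w]
    refine Finset.sum_congr rfl fun p _ => ?_
    rw [Finset.sum_mul]
    refine Finset.sum_congr rfl fun q _ => ?_
    rw [Finset.sum_mul]
    refine Finset.sum_congr rfl fun r _ => by ring
  have h2 : ∀ w : ℝ, ∀ p ≤ d, ∀ q ≤ d,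
      (∑ r ∈ range (d+1), e p q r * bern d r w) = 0 := by
    intro w p hp
    apply bern_unique
    intro v
    rw [← h1 v w p hp]
    refine Finset.sum_congr rfl fun q _ => ?_
    rw [Finset.sum_mul]
    refine Finset.sum_congr rfl fun r _ => by ring
  intro p hp q hq r hr
  exact bern_unique d _ (fun w => h2 w p hp q hq) r hr

lemma mul3 (a : ℝ) (m : ℕ) (f g h : ℕ → ℝ) :
    a * (∑ p ∈ range m, f p) * (∑ q ∈ range m, g q) * (∑ r ∈ range m, h r)
      = ∑ p ∈ range m, ∑ q ∈ range m, ∑ r ∈ range m, a * f p * g q * h r := by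
  symm
  calc ∑ p ∈ range m, ∑ q ∈ range m, ∑ r ∈ range m, a * f p * g q * h r
      = ∑ p ∈ range m, ∑ q ∈ range m, (a * f p * g q) * (∑ r ∈ range m, h r) :=
        Finset.sum_congr rfl fun p _ => Finset.sum_congr rfl fun q _ => by
          rw [← Finset.mul_sum]
    _ = ∑ p ∈ range m, (a * f p) * (∑ q ∈ range m, g q) * (∑ r ∈ range m, h r) :=
        Finset.sum_congr rfl fun p _ => by rw [← Finset.sum_mul, ← Finset.mul_sum]
    _ = a * (∑ p ∈ range m, f p) * (∑ q ∈ range m, g q) * (∑ r ∈ range m, h r) := by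
        rw [← Finset.sum_mul, ← Finset.sum_mul, ← Finset.mul_sum]

lemma sum_swap4 {n m : ℕ} (F : ℕ → ℕ → ℕ → ℕ → ℝ) :
    ∑ α ∈ range n, ∑ p ∈ range m, ∑ q ∈ range m, ∑ r ∈ range m, F α p q r
      = ∑ p ∈ range m, ∑ q ∈ range m, ∑ r ∈ range m, ∑ α ∈ range n, F α p q r := by
  rw [Finset.sum_comm]
  refine Finset.sum_congr rfl fun p _ => ?_
  rw [Finset.sum_comm]
  refine Finset.sum_congr rfl fun q _ => ?_
  rw [Finset.sum_comm]

lemma swap3 (n m : ℕ) (A : ℕ → ℕ → ℕ → ℝ) (P Q R : ℕ → ℕ → ℝ) (x y z : ℕ → ℝ) :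
    (∑ α ∈ range n, ∑ β ∈ range n, ∑ γ ∈ range n, A α β γ *
        (∑ p ∈ range m, P α p * x p) * (∑ q ∈ range m, Q β q * y q) *
        (∑ r ∈ range m, R γ r * z r))
      = ∑ p ∈ range m, ∑ q ∈ range m, ∑ r ∈ range m,
          (∑ α ∈ range n, ∑ β ∈ range n, ∑ γ ∈ range n,
            A α β γ * P α p * Q β q * R γ r) * x p * y q * z r := by
  have step1 : (∑ α ∈ range n, ∑ β ∈ range n, ∑ γ ∈ range n, A α β γ *
        (∑ p ∈ range m, P α p * x p) * (∑ q ∈ range m, Q β q * y q) *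
        (∑ r ∈ range m, R γ r * z r))
      = ∑ α ∈ range n, ∑ β ∈ range n, ∑ γ ∈ range n, ∑ p ∈ range m, ∑ q ∈ range m,
          ∑ r ∈ range m, A α β γ * P α p * Q β q * R γ r * x p * y q * z r := by
    refine Finset.sum_congr rfl fun α _ => Finset.sum_congr rfl fun β _ =>
      Finset.sum_congr rfl fun γ _ => ?_
    rw [mul3]
    refine Finset.sum_congr rfl fun p _ => Finset.sum_congr rfl fun q _ =>
      Finset.sum_congr rfl fun r _ => by ring
  rw [step1]
  have step2 : ∀ α ∈ range n, ∀ β ∈ range n,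
      (∑ γ ∈ range n, ∑ p ∈ range m, ∑ q ∈ range m, ∑ r ∈ range m,
        A α β γ * P α p * Q β q * R γ r * x p * y q * z r)
      = ∑ p ∈ range m, ∑ q ∈ range m, ∑ r ∈ range m, ∑ γ ∈ range n,
          A α β γ * P α p * Q β q * R γ r * x p * y q * z r :=
    fun α _ β _ => sum_swap4 _
  rw [Finset.sum_congr rfl fun α hα => Finset.sum_congr rfl fun β hβ => step2 α hα β hβ]
  have step3 : ∀ α ∈ range n,
      (∑ β ∈ range n, ∑ p ∈ range m, ∑ q ∈ range m, ∑ r ∈ range m, ∑ γ ∈ range n,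
        A α β γ * P α p * Q β q * R γ r * x p * y q * z r)
      = ∑ p ∈ range m, ∑ q ∈ range m, ∑ r ∈ range m, ∑ β ∈ range n, ∑ γ ∈ range n,
          A α β γ * P α p * Q β q * R γ r * x p * y q * z r :=
    fun α _ => sum_swap4 _
  rw [Finset.sum_congr rfl step3, sum_swap4]
  refine Finset.sum_congr rfl fun p _ => Finset.sum_congr rfl fun q _ =>
    Finset.sum_congr rfl fun r _ => ?_
  rw [mul_assoc, mul_assoc, Finset.sum_mul]
  refine Finset.sum_congr rfl fun α _ => ?_
  rw [Finset.sum_mul]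
  refine Finset.sum_congr rfl fun β _ => ?_
  rw [Finset.sum_mul]
  exact Finset.sum_congr rfl fun γ _ => by ring

lemma shift_pow (d σ i : ℕ) (α : ℕ) (hα : α ≤ d) (u : ℝ) :
    (((i:ℝ) + u) / (σ:ℝ))^α = ∑ α' ∈ range (d+1), Eco σ i α α' * u ^ α' := by
  have h1 : ∑ α' ∈ range (d+1), Eco σ i α α' * u ^ α'
      = ∑ α' ∈ range (α+1), Eco σ i α α' * u ^ α' := by
    refine (Finset.sum_subset ?_ ?_).symm
    · intro x hx; exact mem_range.mpr (by have := mem_range.mp hx; omega)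
    · intro x hx hx'
      have : ¬ x ≤ α := by
        have := mem_range.mp hx; simp only [mem_range] at hx'; omega
      simp [Eco, this]
  rw [h1, div_pow, add_comm ((i:ℝ)) u, add_pow, Finset.sum_div]
  refine Finset.sum_congr rfl fun α' hα' => ?_
  have hle : α' ≤ α := by have := mem_range.mp hα'; omega
  simp only [Eco, if_pos hle]
  ring

lemma mono_bern (d α : ℕ) (hα : α ≤ d) (u : ℝ) :
    u ^ α = ∑ p ∈ range (d+1), Nco d p α * bern d p u := by
  have h1 : ∑ p ∈ range (d+1), Nco d p α * bern d p u
      = ∑ p ∈ Finset.Ico α (d+1), Nco d p α * bern d p u := by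
    refine (Finset.sum_subset ?_ ?_).symm
    · intro x hx; simp only [Finset.mem_Ico] at hx; exact mem_range.mpr hx.2
    · intro x hx hx'
      have : ¬ α ≤ x := by
        simp only [Finset.mem_Ico, mem_range] at hx hx'; omega
      simp [Nco, this]
  rw [h1, Finset.sum_Ico_eq_sum_range, show d + 1 - α = (d - α) + 1 by omega]
  have key : ∀ m ∈ range ((d - α) + 1),
      Nco d (α + m) α * bern d (α + m) u
        = ((d-α).choose m : ℝ) * u ^ (α + m) * (1 - u) ^ (d - α - m) := by
    intro m hm
    have hm' : m ≤ d - α := by have := mem_range.mp hm; omega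
    have hsub : d - (α + m) = d - α - m := by omega
    have hcc : (d.choose (α+m) : ℝ) * ((α+m).choose α)
        = (d.choose α) * ((d-α).choose m) := by
      have := Nat.choose_mul (n := d) (k := α + m) (s := α) (Nat.le_add_right α m)
      rw [Nat.add_sub_cancel_left] at this
      exact_mod_cast congrArg (Nat.cast : ℕ → ℝ) this
    have hdpos : (0:ℝ) < (d.choose α : ℝ) := by exact_mod_cast Nat.choose_pos hα
    simp only [Nco, if_pos (Nat.le_add_right α m), bern, hsub]
    field_simp
    linear_combination (u ^ (α + m) * (1 - u) ^ (d - α - m)) * hcc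
  rw [Finset.sum_congr rfl key]
  have hb : (u + (1 - u)) ^ (d - α) = ∑ m ∈ range ((d-α)+1),
      u ^ m * (1-u) ^ (d - α - m) * ((d-α).choose m : ℝ) := add_pow u (1-u) (d-α)
  have : u ^ α = u ^ α * (u + (1 - u)) ^ (d - α) := by
    rw [show u + (1 - u) = 1 by ring, one_pow, mul_one]
  rw [this, hb, Finset.mul_sum]
  refine Finset.sum_congr rfl fun m hm => ?_
  rw [pow_add]
  ring

/-- The representation of the shifted-rescaled polynomial in the Bernstein basis. -/
lemma repr_lemma (d : ℕ) (a : ℕ → ℕ → ℕ → ℝ) (g : ℝ → ℝ → ℝ → ℝ)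
    (hgpoly : ∀ u v w : ℝ, g u v w
      = ∑ α ∈ Finset.range (d + 1), ∑ β ∈ Finset.range (d + 1),
          ∑ γ ∈ Finset.range (d + 1), a α β γ * u ^ α * v ^ β * w ^ γ)
    (σ i j k : ℕ) (u v w : ℝ) :
    g (((i : ℝ) + u) / (σ : ℝ)) (((j : ℝ) + v) / (σ : ℝ)) (((k : ℝ) + w) / (σ : ℝ))
      = ∑ p ∈ range (d+1), ∑ q ∈ range (d+1), ∑ r ∈ range (d+1),
          Cco d a σ i j k p q r * bern d p u * bern d q v * bern d r w := by
  rw [hgpoly]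
  calc ∑ α₀ ∈ range (d+1), ∑ β₀ ∈ range (d+1), ∑ γ₀ ∈ range (d+1),
        a α₀ β₀ γ₀ * (((i : ℝ) + u) / (σ : ℝ)) ^ α₀ * (((j : ℝ) + v) / (σ : ℝ)) ^ β₀ *
          (((k : ℝ) + w) / (σ : ℝ)) ^ γ₀
      = ∑ α₀ ∈ range (d+1), ∑ β₀ ∈ range (d+1), ∑ γ₀ ∈ range (d+1),
          a α₀ β₀ γ₀ * (∑ α ∈ range (d+1), Eco σ i α₀ α * u ^ α) *
            (∑ β ∈ range (d+1), Eco σ j β₀ β * v ^ β) *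
            (∑ γ ∈ range (d+1), Eco σ k γ₀ γ * w ^ γ) := by
        refine Finset.sum_congr rfl fun α₀ hα₀ => Finset.sum_congr rfl fun β₀ hβ₀ =>
          Finset.sum_congr rfl fun γ₀ hγ₀ => ?_
        rw [shift_pow d σ i α₀ (by have := mem_range.mp hα₀; omega) u,
          shift_pow d σ j β₀ (by have := mem_range.mp hβ₀; omega) v,
          shift_pow d σ k γ₀ (by have := mem_range.mp hγ₀; omega) w]
    _ = ∑ α ∈ range (d+1), ∑ β ∈ range (d+1), ∑ γ ∈ range (d+1),
          Aco d a σ i j k α β γ * u ^ α * v ^ β * w ^ γ :=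
        swap3 (d+1) (d+1) a (fun α₀ α => Eco σ i α₀ α) (fun β₀ β => Eco σ j β₀ β)
          (fun γ₀ γ => Eco σ k γ₀ γ) (fun α => u ^ α) (fun β => v ^ β) (fun γ => w ^ γ)
    _ = ∑ α ∈ range (d+1), ∑ β ∈ range (d+1), ∑ γ ∈ range (d+1),
          Aco d a σ i j k α β γ * (∑ p ∈ range (d+1), Nco d p α * bern d p u) *
            (∑ q ∈ range (d+1), Nco d q β * bern d q v) *
            (∑ r ∈ range (d+1), Nco d r γ * bern d r w) := by
        refine Finset.sum_congr rfl fun α hα => Finset.sum_congr rfl fun β hβ =>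
          Finset.sum_congr rfl fun γ hγ => ?_
        rw [← mono_bern d α (by have := mem_range.mp hα; omega) u,
          ← mono_bern d β (by have := mem_range.mp hβ; omega) v,
          ← mono_bern d γ (by have := mem_range.mp hγ; omega) w]
    _ = ∑ p ∈ range (d+1), ∑ q ∈ range (d+1), ∑ r ∈ range (d+1),
          Cco d a σ i j k p q r * bern d p u * bern d q v * bern d r w :=
        swap3 (d+1) (d+1) (Aco d a σ i j k) (fun α p => Nco d p α) (fun β q => Nco d q β)
          (fun γ r => Nco d r γ) (fun p => bern d p u) (fun q => bern d q v)
          (fun r => bern d r w)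

lemma Eco_nonneg (σ i α α' : ℕ) : 0 ≤ Eco σ i α α' := by
  unfold Eco
  split
  · positivity
  · exact le_rfl

lemma choose_le_two_pow' (n k : ℕ) : (n.choose k : ℝ) ≤ 2 ^ n := by
  have h : n.choose k ≤ 2 ^ n := by
    rcases le_or_gt k n with hk | hk
    · calc n.choose k ≤ ∑ m ∈ range (n+1), n.choose m :=
            Finset.single_le_sum (f := fun m => n.choose m) (fun m _ => Nat.zero_le _)
              (mem_range.mpr (by omega))
        _ = 2 ^ n := Nat.sum_range_choose n
    · rw [Nat.choose_eq_zero_of_lt hk]; positivity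
  calc (n.choose k : ℝ) ≤ (2 ^ n : ℕ) := by exact_mod_cast h
    _ = (2:ℝ) ^ n := by push_cast; ring

lemma Eco_le (d σ i α α' : ℕ) (hα : α ≤ d) (hi : i ≤ σ) (hσ : 0 < σ) :
    Eco σ i α α' ≤ 2 ^ d / (σ:ℝ) ^ α' := by
  have hσR : (0:ℝ) < (σ:ℝ) := by exact_mod_cast hσ
  unfold Eco
  split
  · rename_i hle
    have hsplit : α = (α - α') + α' := by omega
    rw [div_le_div_iff₀ (by positivity) (by positivity)]
    calc (α.choose α' : ℝ) * (i:ℝ)^(α-α') * (σ:ℝ) ^ α'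
        ≤ (2^d) * (σ:ℝ)^(α-α') * (σ:ℝ) ^ α' := by
          have h1 : (α.choose α' : ℝ) ≤ 2 ^ d :=
            (choose_le_two_pow' α α').trans (by
              apply pow_le_pow_right₀ (by norm_num) hα)
          have h2 : (i:ℝ)^(α-α') ≤ (σ:ℝ)^(α-α') := by
            apply pow_le_pow_left₀ (by positivity) (by exact_mod_cast hi)
          have := mul_le_mul h1 h2 (by positivity) (by positivity)
          exact mul_le_mul_of_nonneg_right this (by positivity)
      _ = 2^d * (σ:ℝ)^α := by rw [mul_assoc, ← pow_add, ← hsplit]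
  · positivity

lemma Eco_le_base (d σ i α α' : ℕ) (hα : α ≤ d) (hi : i ≤ σ) (hσ : 0 < σ) :
    Eco σ i α α' ≤ 2 ^ d := by
  refine (Eco_le d σ i α α' hα hi hσ).trans ?_
  have hσ1 : (1:ℝ) ≤ (σ:ℝ) := by exact_mod_cast hσ
  have hσR : (1:ℝ) ≤ (σ:ℝ) ^ α' := one_le_pow₀ hσ1
  calc (2:ℝ)^d / (σ:ℝ)^α' ≤ 2^d / 1 :=
        div_le_div_of_nonneg_left (by positivity) (by norm_num) hσR
    _ = 2^d := by ring

lemma Eco_le_div (d σ i α α' : ℕ) (hα : α ≤ d) (hi : i ≤ σ) (hσ : 0 < σ)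
    (hα' : 1 ≤ α') : Eco σ i α α' ≤ 2 ^ d / (σ:ℝ) := by
  refine (Eco_le d σ i α α' hα hi hσ).trans ?_
  have hσR : (1:ℝ) ≤ (σ:ℝ) := by exact_mod_cast hσ
  have h : (σ:ℝ) ≤ (σ:ℝ) ^ α' := le_self_pow₀ hσR (by omega)
  exact div_le_div_of_nonneg_left (by positivity) (by exact_mod_cast hσ) h

lemma Nco_nonneg (d p α : ℕ) : 0 ≤ Nco d p α := by
  unfold Nco; split <;> positivity

lemma Nco_le_one (d p α : ℕ) (hp : p ≤ d) : Nco d p α ≤ 1 := by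
  unfold Nco
  split
  · rename_i hle
    have hα : α ≤ d := hle.trans hp
    have hdpos : (0:ℝ) < (d.choose α : ℝ) := by exact_mod_cast Nat.choose_pos hα
    rw [div_le_one hdpos]
    exact_mod_cast Nat.choose_le_choose α hp
  · norm_num

lemma Nco_zero (d p : ℕ) : Nco d p 0 = 1 := by
  simp [Nco]

lemma Aco_zero (d : ℕ) (a : ℕ → ℕ → ℕ → ℝ) (g : ℝ → ℝ → ℝ → ℝ)
    (hgpoly : ∀ u v w : ℝ, g u v w
      = ∑ α ∈ Finset.range (d + 1), ∑ β ∈ Finset.range (d + 1),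
          ∑ γ ∈ Finset.range (d + 1), a α β γ * u ^ α * v ^ β * w ^ γ)
    (σ i j k : ℕ) :
    Aco d a σ i j k 0 0 0 = g ((i:ℝ)/(σ:ℝ)) ((j:ℝ)/(σ:ℝ)) ((k:ℝ)/(σ:ℝ)) := by
  rw [hgpoly]
  refine Finset.sum_congr rfl fun α₀ _ => Finset.sum_congr rfl fun β₀ _ =>
    Finset.sum_congr rfl fun γ₀ _ => ?_
  simp [Eco, div_pow]


lemma mul3_le {a b c A B C : ℝ} (hb : 0 ≤ b) (hc : 0 ≤ c)
    (hA : 0 ≤ A) (hB : 0 ≤ B)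
    (h1 : a ≤ A) (h2 : b ≤ B) (h3 : c ≤ C) : a * b * c ≤ A * B * C :=
  mul_le_mul (mul_le_mul h1 h2 hb hA) h3 hc (mul_nonneg hA hB)

lemma abs_sum3_le (n : ℕ) (f : ℕ → ℕ → ℕ → ℝ) :
    |∑ α ∈ range n, ∑ β ∈ range n, ∑ γ ∈ range n, f α β γ|
      ≤ ∑ α ∈ range n, ∑ β ∈ range n, ∑ γ ∈ range n, |f α β γ| :=
  (Finset.abs_sum_le_sum_abs _ _).trans (Finset.sum_le_sum fun α _ =>
    (Finset.abs_sum_le_sum_abs _ _).trans (Finset.sum_le_sum fun β _ =>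
      Finset.abs_sum_le_sum_abs _ _))

lemma Aco_bound (d : ℕ) (a : ℕ → ℕ → ℕ → ℝ) (σ i j k α β γ : ℕ)
    (hσ : 0 < σ) (hi : i ≤ σ) (hj : j ≤ σ) (hk : k ≤ σ) (h1 : 1 ≤ α + β + γ) :
    |Aco d a σ i j k α β γ|
      ≤ (∑ α₀ ∈ range (d+1), ∑ β₀ ∈ range (d+1), ∑ γ₀ ∈ range (d+1), |a α₀ β₀ γ₀|)
          * (((2:ℝ)^d)^3 / (σ:ℝ)) := by
  have hσR : (0:ℝ) < (σ:ℝ) := by exact_mod_cast hσ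
  have hterm : ∀ α₀ ∈ range (d+1), ∀ β₀ ∈ range (d+1), ∀ γ₀ ∈ range (d+1),
      |a α₀ β₀ γ₀ * Eco σ i α₀ α * Eco σ j β₀ β * Eco σ k γ₀ γ|
        ≤ |a α₀ β₀ γ₀| * (((2:ℝ)^d)^3 / (σ:ℝ)) := by
    intro α₀ hα₀ β₀ hβ₀ γ₀ hγ₀
    have hα₀' : α₀ ≤ d := by have := mem_range.mp hα₀; omega
    have hβ₀' : β₀ ≤ d := by have := mem_range.mp hβ₀; omega
    have hγ₀' : γ₀ ≤ d := by have := mem_range.mp hγ₀; omega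
    have heq : |a α₀ β₀ γ₀ * Eco σ i α₀ α * Eco σ j β₀ β * Eco σ k γ₀ γ|
        = |a α₀ β₀ γ₀| * (Eco σ i α₀ α * Eco σ j β₀ β * Eco σ k γ₀ γ) := by
      rw [abs_mul, abs_mul, abs_mul, abs_of_nonneg (Eco_nonneg σ i α₀ α),
        abs_of_nonneg (Eco_nonneg σ j β₀ β), abs_of_nonneg (Eco_nonneg σ k γ₀ γ)]
      ring
    rw [heq]
    refine mul_le_mul_of_nonneg_left ?_ (abs_nonneg _)
    have hEprod : Eco σ i α₀ α * Eco σ j β₀ β * Eco σ k γ₀ γ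
        ≤ ((2:ℝ)^d)^3 / (σ:ℝ) := by
      have case1 : 1 ≤ α ∨ 1 ≤ β ∨ 1 ≤ γ := by omega
      rcases case1 with hcase | hcase | hcase
      · calc Eco σ i α₀ α * Eco σ j β₀ β * Eco σ k γ₀ γ
            ≤ ((2:ℝ)^d / (σ:ℝ)) * (2:ℝ)^d * (2:ℝ)^d :=
              mul3_le (Eco_nonneg _ _ _ _) (Eco_nonneg _ _ _ _) (by positivity)
                (by positivity) (Eco_le_div d σ i α₀ α hα₀' hi hσ hcase)
                (Eco_le_base d σ j β₀ β hβ₀' hj hσ) (Eco_le_base d σ k γ₀ γ hγ₀' hk hσ)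
          _ = ((2:ℝ)^d)^3 / (σ:ℝ) := by ring
      · calc Eco σ i α₀ α * Eco σ j β₀ β * Eco σ k γ₀ γ
            ≤ (2:ℝ)^d * ((2:ℝ)^d / (σ:ℝ)) * (2:ℝ)^d :=
              mul3_le (Eco_nonneg _ _ _ _) (Eco_nonneg _ _ _ _) (by positivity)
                (by positivity) (Eco_le_base d σ i α₀ α hα₀' hi hσ)
                (Eco_le_div d σ j β₀ β hβ₀' hj hσ hcase) (Eco_le_base d σ k γ₀ γ hγ₀' hk hσ)
          _ = ((2:ℝ)^d)^3 / (σ:ℝ) := by ring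
      · calc Eco σ i α₀ α * Eco σ j β₀ β * Eco σ k γ₀ γ
            ≤ (2:ℝ)^d * (2:ℝ)^d * ((2:ℝ)^d / (σ:ℝ)) :=
              mul3_le (Eco_nonneg _ _ _ _) (Eco_nonneg _ _ _ _) (by positivity)
                (by positivity) (Eco_le_base d σ i α₀ α hα₀' hi hσ)
                (Eco_le_base d σ j β₀ β hβ₀' hj hσ) (Eco_le_div d σ k γ₀ γ hγ₀' hk hσ hcase)
          _ = ((2:ℝ)^d)^3 / (σ:ℝ) := by ring
    exact hEprod
  calc |Aco d a σ i j k α β γ|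
      ≤ ∑ α₀ ∈ range (d+1), ∑ β₀ ∈ range (d+1), ∑ γ₀ ∈ range (d+1),
          |a α₀ β₀ γ₀ * Eco σ i α₀ α * Eco σ j β₀ β * Eco σ k γ₀ γ| := abs_sum3_le _ _
    _ ≤ ∑ α₀ ∈ range (d+1), ∑ β₀ ∈ range (d+1), ∑ γ₀ ∈ range (d+1),
          |a α₀ β₀ γ₀| * (((2:ℝ)^d)^3 / (σ:ℝ)) :=
        Finset.sum_le_sum fun α₀ hα₀ => Finset.sum_le_sum fun β₀ hβ₀ =>
          Finset.sum_le_sum fun γ₀ hγ₀ => hterm α₀ hα₀ β₀ hβ₀ γ₀ hγ₀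
    _ = (∑ α₀ ∈ range (d+1), ∑ β₀ ∈ range (d+1), ∑ γ₀ ∈ range (d+1), |a α₀ β₀ γ₀|)
          * (((2:ℝ)^d)^3 / (σ:ℝ)) := by simp only [Finset.sum_mul]

/-- Theorem 3: for a trivariate polynomial `g` of degree at most `d`
in each variable (given by its monomial coefficients `a`) with `g ≥ ρ > 0` on the
unit cube, all tensor-product Bernstein coefficients of `g` on every subcube
`[i/σ,(i+1)/σ] × [j/σ,(j+1)/σ] × [k/σ,(k+1)/σ]` of a uniform `σ`-fold subdivision
are strictly positive once the subdivision is fine enough.  In particular, the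
Bézier coefficients of the (positive) Jacobian determinant of a regular Bézier
volume share the same positive sign on every sub-block after sufficiently fine
subdivision. -/
theorem subdivided_trivariate_bernstein_coeffs_pos (d : ℕ)
    (a : ℕ → ℕ → ℕ → ℝ) (g : ℝ → ℝ → ℝ → ℝ)
    (hgpoly : ∀ u v w : ℝ, g u v w
      = ∑ α ∈ Finset.range (d + 1), ∑ β ∈ Finset.range (d + 1),
          ∑ γ ∈ Finset.range (d + 1), a α β γ * u ^ α * v ^ β * w ^ γ)
    (ρ : ℝ) (hρ : 0 < ρ)
    (hg : ∀ u ∈ Set.Icc (0:ℝ) 1, ∀ v ∈ Set.Icc (0:ℝ) 1, ∀ w ∈ Set.Icc (0:ℝ) 1,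
      ρ ≤ g u v w) :
    ∃ σ₀ : ℕ, ∀ σ : ℕ, σ₀ ≤ σ → ∀ i j k : ℕ, i < σ → j < σ → k < σ →
      ∀ c : ℕ → ℕ → ℕ → ℝ,
        (∀ u v w : ℝ,
          g (((i : ℝ) + u) / (σ : ℝ)) (((j : ℝ) + v) / (σ : ℝ))
              (((k : ℝ) + w) / (σ : ℝ))
            = ∑ p ∈ Finset.range (d + 1), ∑ q ∈ Finset.range (d + 1),
                ∑ r ∈ Finset.range (d + 1),
                  c p q r * bern d p u * bern d q v * bern d r w) →
        ∀ p q r : ℕ, p ≤ d → q ≤ d → r ≤ d → 0 < c p q r := by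
  classical
  set Sa : ℝ := ∑ α ∈ range (d+1), ∑ β ∈ range (d+1), ∑ γ ∈ range (d+1), |a α β γ|
    with hSa
  have hSa0 : 0 ≤ Sa := by
    apply Finset.sum_nonneg; intro α _
    apply Finset.sum_nonneg; intro β _
    exact Finset.sum_nonneg fun γ _ => abs_nonneg _
  set K : ℝ := ((d:ℝ)+1)^3 * ((2:ℝ)^d)^3 * Sa with hK
  have hK0 : 0 ≤ K := mul_nonneg (mul_nonneg (by positivity) (by positivity)) hSa0
  refine ⟨⌈K/ρ⌉₊ + 1, ?_⟩
  intro σ hσ i j k hi hj hk c hc p q r hp hq hr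
  have hσ0 : 0 < σ := lt_of_lt_of_le (Nat.succ_pos _) hσ
  have hσR : (0:ℝ) < (σ:ℝ) := by exact_mod_cast hσ0
  have hKρ : K / (σ:ℝ) < ρ := by
    have h1 : K / ρ < (σ:ℝ) := by
      calc K / ρ ≤ (⌈K/ρ⌉₊ : ℝ) := Nat.le_ceil _
        _ < ((⌈K/ρ⌉₊ + 1 : ℕ) : ℝ) := by exact_mod_cast Nat.lt_succ_self _
        _ ≤ (σ:ℝ) := by exact_mod_cast hσ
    rw [div_lt_iff₀ hσR]
    rw [div_lt_iff₀ hρ] at h1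
    linarith
  -- identify `c` with the canonical Bernstein coefficients
  have hCeq : c p q r = Cco d a σ i j k p q r := by
    have hzero : ∀ u v w : ℝ, ∑ p' ∈ range (d+1), ∑ q' ∈ range (d+1), ∑ r' ∈ range (d+1),
        (c p' q' r' - Cco d a σ i j k p' q' r') * bern d p' u * bern d q' v
          * bern d r' w = 0 := by
      intro u v w
      have h1 := hc u v w
      have h2 := repr_lemma d a g hgpoly σ i j k u v w
      have h3 : (∑ p' ∈ range (d+1), ∑ q' ∈ range (d+1), ∑ r' ∈ range (d+1),
          c p' q' r' * bern d p' u * bern d q' v * bern d r' w)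
          - (∑ p' ∈ range (d+1), ∑ q' ∈ range (d+1), ∑ r' ∈ range (d+1),
          Cco d a σ i j k p' q' r' * bern d p' u * bern d q' v * bern d r' w) = 0 := by
        rw [← h1, ← h2]; ring
      calc ∑ p' ∈ range (d+1), ∑ q' ∈ range (d+1), ∑ r' ∈ range (d+1),
            (c p' q' r' - Cco d a σ i j k p' q' r') * bern d p' u * bern d q' v
              * bern d r' w
          = ∑ p' ∈ range (d+1), ∑ q' ∈ range (d+1), ∑ r' ∈ range (d+1),
            (c p' q' r' * bern d p' u * bern d q' v * bern d r' w
              - Cco d a σ i j k p' q' r' * bern d p' u * bern d q' v * bern d r' w) :=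
            Finset.sum_congr rfl fun p' _ => Finset.sum_congr rfl fun q' _ =>
              Finset.sum_congr rfl fun r' _ => by ring
        _ = 0 := by rw [← h3]; simp [Finset.sum_sub_distrib]
    have := bern_unique3 d _ hzero p hp q hq r hr
    linarith
  rw [hCeq]
  -- positivity of the canonical coefficients
  set T : Finset (ℕ × ℕ × ℕ) := range (d+1) ×ˢ (range (d+1) ×ˢ range (d+1)) with hT
  set F : ℕ × ℕ × ℕ → ℝ := fun t =>
    Aco d a σ i j k t.1 t.2.1 t.2.2 * Nco d p t.1 * Nco d q t.2.1 * Nco d r t.2.2 with hF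
  have hCT : Cco d a σ i j k p q r = ∑ t ∈ T, F t := by
    rw [hT, Finset.sum_product]
    exact Finset.sum_congr rfl fun α _ => by rw [Finset.sum_product]
  have h000 : ((0,0,0) : ℕ × ℕ × ℕ) ∈ T := by simp [hT]
  have hsplit : ∑ t ∈ T, F t = F (0,0,0) + ∑ t ∈ T.erase (0,0,0), F t :=
    (Finset.add_sum_erase T F h000).symm
  have hF0 : ρ ≤ F (0,0,0) := by
    have : F (0,0,0) = g ((i:ℝ)/(σ:ℝ)) ((j:ℝ)/(σ:ℝ)) ((k:ℝ)/(σ:ℝ)) := by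
      show Aco d a σ i j k 0 0 0 * Nco d p 0 * Nco d q 0 * Nco d r 0 = _
      rw [Nco_zero, Nco_zero, Nco_zero, Aco_zero d a g hgpoly σ i j k]
      ring
    rw [this]
    have hmem : ∀ m : ℕ, m < σ → (m:ℝ)/(σ:ℝ) ∈ Set.Icc (0:ℝ) 1 := by
      intro m hm
      constructor
      · positivity
      · rw [div_le_one hσR]; exact_mod_cast hm.le
    exact hg _ (hmem i hi) _ (hmem j hj) _ (hmem k hk)
  have hbound : ∀ t ∈ T.erase (0,0,0), |F t| ≤ Sa * (((2:ℝ)^d)^3 / (σ:ℝ)) := by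
    intro t ht
    obtain ⟨hne, hmem⟩ := Finset.mem_erase.mp ht
    have h1 : 1 ≤ t.1 + t.2.1 + t.2.2 := by
      rcases t with ⟨t1, t2, t3⟩
      by_contra hcon
      push_neg at hcon
      simp only at hcon hne
      apply hne
      simp only [Prod.mk.injEq]
      omega
    have hA := Aco_bound d a σ i j k t.1 t.2.1 t.2.2 hσ0 hi.le hj.le hk.le h1
    have hNp := Nco_le_one d p t.1 hp
    have hNq := Nco_le_one d q t.2.1 hq
    have hNr := Nco_le_one d r t.2.2 hr
    have hFabs : |F t| = |Aco d a σ i j k t.1 t.2.1 t.2.2|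
        * (Nco d p t.1 * Nco d q t.2.1 * Nco d r t.2.2) := by
      rw [hF]
      simp only
      rw [abs_mul, abs_mul, abs_mul, abs_of_nonneg (Nco_nonneg d p t.1),
        abs_of_nonneg (Nco_nonneg d q t.2.1), abs_of_nonneg (Nco_nonneg d r t.2.2)]
      ring
    rw [hFabs]
    calc |Aco d a σ i j k t.1 t.2.1 t.2.2| * (Nco d p t.1 * Nco d q t.2.1 * Nco d r t.2.2)
        ≤ (Sa * (((2:ℝ)^d)^3 / (σ:ℝ))) * 1 := by
          refine mul_le_mul hA ?_ ?_ ?_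
          · calc Nco d p t.1 * Nco d q t.2.1 * Nco d r t.2.2
                ≤ 1 * 1 * 1 := mul3_le (Nco_nonneg _ _ _) (Nco_nonneg _ _ _)
                  zero_le_one zero_le_one hNp hNq hNr
              _ = 1 := by ring
          · exact mul_nonneg (mul_nonneg (Nco_nonneg _ _ _) (Nco_nonneg _ _ _))
              (Nco_nonneg _ _ _)
          · exact mul_nonneg hSa0 (by positivity)
      _ = Sa * (((2:ℝ)^d)^3 / (σ:ℝ)) := by ring
  have hcard : ((T.erase (0,0,0)).card : ℝ) ≤ ((d:ℝ)+1)^3 := by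
    have h1 : (T.erase (0,0,0)).card ≤ T.card := Finset.card_erase_le
    have h2 : T.card = (d+1) * ((d+1) * (d+1)) := by
      rw [hT, Finset.card_product, Finset.card_product, Finset.card_range]
    have : (T.erase (0,0,0)).card ≤ (d+1) * ((d+1) * (d+1)) := h2 ▸ h1
    calc ((T.erase (0,0,0)).card : ℝ) ≤ (((d+1) * ((d+1) * (d+1)) : ℕ) : ℝ) := by
          exact_mod_cast this
      _ = ((d:ℝ)+1)^3 := by push_cast; ring
  have hrest : |∑ t ∈ T.erase (0,0,0), F t| ≤ K / (σ:ℝ) := by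
    calc |∑ t ∈ T.erase (0,0,0), F t| ≤ ∑ t ∈ T.erase (0,0,0), |F t| :=
          Finset.abs_sum_le_sum_abs _ _
      _ ≤ (T.erase (0,0,0)).card • (Sa * (((2:ℝ)^d)^3 / (σ:ℝ))) :=
          Finset.sum_le_card_nsmul _ _ _ hbound
      _ = ((T.erase (0,0,0)).card : ℝ) * (Sa * (((2:ℝ)^d)^3 / (σ:ℝ))) := by
          rw [nsmul_eq_mul]
      _ ≤ ((d:ℝ)+1)^3 * (Sa * (((2:ℝ)^d)^3 / (σ:ℝ))) := by
          exact mul_le_mul_of_nonneg_right hcard (mul_nonneg hSa0 (by positivity))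
      _ = K / (σ:ℝ) := by rw [hK]; ring
  have hrest' : -(K / (σ:ℝ)) ≤ ∑ t ∈ T.erase (0,0,0), F t := by
    have := neg_abs_le (∑ t ∈ T.erase (0,0,0), F t)
    linarith
  rw [hCT, hsplit]
  linarith
end
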